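/- arXiv:2212.12614 — 5 statements merged into one kernel-verified Lean document; each statement's English description precedes it below -/
import Mathlib

section
/- Pointwise holomorphic representative of an L^∞-valued power series (Proposition muhol, direction power series ⇒ pointwise representative): Let (aₙ)_{n∈ℕ} be a sequence of Lebesgue-measurable essentially bounded functions ℂ → ℂ such that for every ρ ∈ (0,1) the series Σₙ ‖aₙ‖_∞ ρⁿ converges, where ‖g‖_∞ denotes the essential supremum of |g|. Then there exists a function μ : 𝔻 × ℂ → ℂ such that: (i) for every z ∈ ℂ, the function t ↦ μ(t,z) is holomorphic on 𝔻; (ii) for every t ∈ 𝔻, the function z ↦ μ(t,z) is measurable and the essential supremum over z of |μ(t,z) − Σ_{k=0}^{n} t^k a_k(z)| tends to 0 as n → ∞ (so z ↦ μ(t,z) represents the sum of the power series Σ t^k a_k in L^∞(ℂ)). -/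
open MeasureTheory Filter Metric

set_option maxHeartbeats 1000000 in
/-- Proposition muhol (power series ⇒ pointwise holomorphic representative): an
`L^∞(ℂ)`-valued power series with radius of convergence at least one has a representative
`μ(t,z)` that is holomorphic in `t` for every `z` and represents the sum of the series in
`L^∞` for every `t` in the unit disk. -/
theorem pointwise_holomorphic_representative
    (a : ℕ → ℂ → ℂ) (hmeas : ∀ n, Measurable (a n))
    (hrad : ∀ ρ : ℝ, ρ ∈ Set.Ioo (0:ℝ) 1 →
      (∑' n : ℕ, eLpNorm (a n) ⊤ volume * ENNReal.ofReal (ρ ^ n)) < ⊤) :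
    ∃ μ : ℂ → ℂ → ℂ,
      (∀ z : ℂ, DifferentiableOn ℂ (fun t => μ t z) (ball 0 1)) ∧
      ∀ t ∈ ball (0:ℂ) 1,
        Measurable (fun z => μ t z) ∧
        Tendsto (fun n : ℕ =>
            eLpNorm (fun z => μ t z - ∑ k ∈ Finset.range (n+1), t ^ k * a k z) ⊤ volume)
          atTop (nhds 0) := by
  classical
  set C : ℕ → ENNReal := fun n => eLpNorm (a n) ⊤ volume with hC
  -- each `C n` is finite
  have hCfin : ∀ n, C n ≠ ⊤ := by
    intro n
    have h2 := hrad (1/2) ⟨by norm_num, by norm_num⟩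
    have hterm : C n * ENNReal.ofReal ((1/2 : ℝ) ^ n) ≤
        ∑' m : ℕ, C m * ENNReal.ofReal ((1/2 : ℝ) ^ m) := ENNReal.le_tsum n
    have hlt : C n * ENNReal.ofReal ((1/2 : ℝ) ^ n) < ⊤ := lt_of_le_of_lt hterm h2
    have hne : ENNReal.ofReal ((1/2 : ℝ) ^ n) ≠ 0 := by
      simp only [ne_eq, ENNReal.ofReal_eq_zero, not_le]
      positivity
    exact (ENNReal.lt_top_of_mul_ne_top_left hlt.ne hne).ne
  set c : ℕ → ℝ := fun n => (C n).toReal with hc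
  have hc_nonneg : ∀ n, 0 ≤ c n := fun n => ENNReal.toReal_nonneg
  -- good representatives
  set b : ℕ → ℂ → ℂ := fun n z => if ‖a n z‖ ≤ c n then a n z else 0 with hb
  have hb_meas : ∀ n, Measurable (b n) := by
    intro n
    exact Measurable.ite (measurableSet_le (hmeas n).norm measurable_const)
      (hmeas n) measurable_const
  have hb_bound : ∀ n z, ‖b n z‖ ≤ c n := by
    intro n z
    simp only [hb]
    split_ifs with h
    · exact h
    · simpa using hc_nonneg n
  have hb_ae : ∀ n, b n =ᵐ[volume] a n := by
    intro n
    have h1 : ∀ᵐ z ∂(volume : Measure ℂ), ‖a n z‖₊ ≤ eLpNormEssSup (a n) volume := by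
      simpa [enorm_eq_nnnorm] using enorm_ae_le_eLpNormEssSup (a n) volume
    filter_upwards [h1] with z hz
    have hz' : ‖a n z‖ ≤ c n := by
      have : (‖a n z‖₊ : ENNReal) ≤ C n := by
        simpa [hC, eLpNorm_exponent_top] using hz
      have := ENNReal.toReal_mono (hCfin n) this
      simpa [hc] using this
    simp only [hb]
    rw [if_pos hz']
  -- summability of coefficient bounds
  have hsum : ∀ r : ℝ, 0 ≤ r → r < 1 → Summable (fun n => c n * r ^ n) := by
    intro r hr0 hr1
    set ρ : ℝ := (r + 1) / 2 with hρ
    have hρ0 : 0 < ρ := by positivity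
    have hρ1 : ρ < 1 := by rw [hρ]; linarith
    have hrρ : r < ρ := by rw [hρ]; linarith
    have htop := hrad ρ ⟨hρ0, hρ1⟩
    have hsum' : Summable (fun n => (C n * ENNReal.ofReal (ρ ^ n)).toReal) :=
      ENNReal.summable_toReal htop.ne
    have heq : (fun n => (C n * ENNReal.ofReal (ρ ^ n)).toReal) = fun n => c n * ρ ^ n := by
      funext n
      rw [ENNReal.toReal_mul, ENNReal.toReal_ofReal (by positivity)]
    rw [heq] at hsum'
    refine Summable.of_nonneg_of_le (fun n => by positivity) (fun n => ?_) hsum'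
    exact mul_le_mul_of_nonneg_left (pow_le_pow_left₀ hr0 hrρ.le n) (hc_nonneg n)
  -- the candidate
  refine ⟨fun t z => ∑' n, b n z * t ^ n, ?_, ?_⟩
  · -- holomorphy in t
    intro z
    set p : FormalMultilinearSeries ℂ ℂ ℂ :=
      FormalMultilinearSeries.ofScalars ℂ (fun n => b n z) with hp
    have hrad1 : (1 : ENNReal) ≤ p.radius := by
      refine ENNReal.le_of_forall_nnreal_lt fun r hr => ?_
      have hr1 : (r : ℝ) < 1 := by exact_mod_cast hr
      refine p.le_radius_of_summable ?_
      have hs := hsum r r.coe_nonneg hr1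
      refine Summable.of_nonneg_of_le (fun n => by positivity) (fun n => ?_) hs
      have hnorm : ‖p n‖ = ‖b n z‖ :=
        FormalMultilinearSeries.ofScalars_norm ℂ (fun n => b n z) n
      calc ‖p n‖ * (r : ℝ) ^ n = ‖b n z‖ * (r : ℝ) ^ n := by rw [hnorm]
        _ ≤ c n * (r : ℝ) ^ n :=
            mul_le_mul_of_nonneg_right (hb_bound n z) (by positivity)
    have hpos : (0 : ENNReal) < p.radius := lt_of_lt_of_le one_pos hrad1
    have hball := (p.hasFPowerSeriesOnBall hpos).mono one_pos hrad1
    have hdiff := hball.differentiableOn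
    have hEball : Metric.eball (0 : ℂ) 1 = ball (0 : ℂ) 1 := by
      rw [show (1 : ENNReal) = ((1 : NNReal) : ENNReal) by norm_num,
        Metric.emetric_ball_nnreal]
      norm_num
    rw [hEball] at hdiff
    refine hdiff.congr fun t _ => ?_
    simp only [FormalMultilinearSeries.sum]
    refine tsum_congr fun n => ?_
    rw [hp, FormalMultilinearSeries.ofScalars_apply_eq, smul_eq_mul]
  · -- convergence in L^∞
    intro t ht
    have ht1 : ‖t‖ < 1 := by simpa [mem_ball, dist_eq_norm] using ht
    have hS : Summable (fun n => c n * ‖t‖ ^ n) := hsum ‖t‖ (norm_nonneg t) ht1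
    have hsummz : ∀ z, Summable (fun n => b n z * t ^ n) := by
      intro z
      refine Summable.of_norm (Summable.of_nonneg_of_le (fun n => norm_nonneg _)
        (fun n => ?_) hS)
      rw [norm_mul, norm_pow]
      exact mul_le_mul_of_nonneg_right (hb_bound n z) (by positivity)
    constructor
    · -- measurability
      have : ∀ N : ℕ, Measurable (fun z => ∑ n ∈ Finset.range N, b n z * t ^ n) := by
        intro N
        exact Finset.measurable_sum _ fun n _ => (hb_meas n).mul measurable_const
      refine measurable_of_tendsto_metrizable this ?_
      rw [tendsto_pi_nhds]
      intro z
      exact (hsummz z).hasSum.tendsto_sum_nat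
    · -- L^∞ convergence of partial sums
      set T : ℕ → ℝ := fun n => ∑' k, c (k + (n + 1)) * ‖t‖ ^ (k + (n + 1)) with hT
      have hTtend : Tendsto T atTop (nhds 0) := by
        have := tendsto_sum_nat_add (f := fun n => c n * ‖t‖ ^ n)
        exact this.comp (tendsto_add_atTop_nat 1)
      have hbound : ∀ n : ℕ,
          eLpNorm (fun z => (∑' m, b m z * t ^ m)
              - ∑ k ∈ Finset.range (n+1), t ^ k * a k z) ⊤ volume
            ≤ ENNReal.ofReal (T n) := by
        intro n
        have hae : (fun z => (∑' m, b m z * t ^ m) - ∑ k ∈ Finset.range (n+1), t ^ k * a k z)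
            =ᵐ[volume]
            (fun z => (∑' m, b m z * t ^ m) - ∑ k ∈ Finset.range (n+1), b k z * t ^ k) := by
          have : ∀ᵐ z ∂(volume : Measure ℂ), ∀ k ∈ Finset.range (n+1), b k z = a k z := by
            rw [eventually_all_finset]
            intro k _
            exact hb_ae k
          filter_upwards [this] with z hz
          congr 1
          refine Finset.sum_congr rfl fun k hk => ?_
          rw [hz k hk, mul_comm]
        rw [eLpNorm_congr_ae hae, eLpNorm_exponent_top]
        refine eLpNormEssSup_le_of_ae_bound (C := T n) ?_
        refine Eventually.of_forall fun z => ?_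
        have hsplit := Summable.sum_add_tsum_nat_add (f := fun m => b m z * t ^ m) (n + 1) (hsummz z)
        have : (∑' m, b m z * t ^ m) - ∑ k ∈ Finset.range (n+1), b k z * t ^ k
            = ∑' k, b (k + (n+1)) z * t ^ (k + (n+1)) := by
          rw [← hsplit]; ring
        rw [this]
        calc ‖∑' k, b (k + (n+1)) z * t ^ (k + (n+1))‖
            ≤ ∑' k, ‖b (k + (n+1)) z * t ^ (k + (n+1))‖ := by
              refine norm_tsum_le_tsum_norm ?_
              exact ((summable_nat_add_iff (f := fun m => b m z * t ^ m) (n+1)).2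
                (hsummz z)).norm
          _ ≤ T n := by
              refine Summable.tsum_le_tsum (fun k => ?_) ?_ ?_
              · rw [norm_mul, norm_pow]
                exact mul_le_mul_of_nonneg_right (hb_bound _ z) (by positivity)
              · exact ((summable_nat_add_iff (f := fun m => b m z * t ^ m) (n+1)).2
                  (hsummz z)).norm
              · exact (summable_nat_add_iff (f := fun m => c m * ‖t‖ ^ m) (n+1)).2 hS
      have hof : Tendsto (fun n => ENNReal.ofReal (T n)) atTop (nhds 0) := by
        rw [show (0 : ENNReal) = ENNReal.ofReal 0 by simp]
        exact (ENNReal.continuous_ofReal.tendsto 0).comp hTtend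
      exact tendsto_of_tendsto_of_tendsto_of_le_of_le tendsto_const_nhds hof
        (fun n => zero_le) hbound
end

section
/- From a pointwise holomorphic bounded family to an L^∞-valued power series (Proposition muhol, direction pointwise ⇒ power series): Let μ : 𝔻 × ℂ → ℂ be a function such that: (i) for every t ∈ 𝔻, z ↦ μ(t,z) is Lebesgue-measurable and M(t) := esssup_z |μ(t,z)| is finite, with t ↦ M(t) locally bounded on 𝔻; (ii) for every z ∈ ℂ, t ↦ μ(t,z) is holomorphic on 𝔻. Then there exist Lebesgue-measurable essentially bounded functions Aₙ : ℂ → ℂ, n ∈ ℕ, such that limsup_n (‖Aₙ‖_∞)^{1/n} ≤ 1 and, for every t ∈ 𝔻, esssup_z |μ(t,z) − Σ_{k=0}^{n} t^k A_k(z)| → 0 as n → ∞. -/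
open MeasureTheory Filter Metric

set_option maxHeartbeats 1000000

/-- Proposition muhol (pointwise holomorphic ⇒ power series): if `μ(t,·)` is a family of
measurable essentially bounded functions, with locally bounded essential sup, and
`t ↦ μ(t,z)` is holomorphic on the unit disk for every `z`, then `t ↦ μ(t,·)` is the sum
of an `L^∞`-valued power series with radius of convergence at least one. -/
theorem holomorphic_family_is_power_series
    (μ : ℂ → ℂ → ℂ)
    (hmeas : ∀ t ∈ ball (0:ℂ) 1, Measurable (μ t))
    (hbd : ∀ t ∈ ball (0:ℂ) 1, eLpNorm (μ t) ⊤ volume < ⊤)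
    (hlocbd : ∀ t₀ ∈ ball (0:ℂ) 1, ∃ ε > (0:ℝ), ∃ C : ENNReal, C < ⊤ ∧
      ∀ t ∈ ball t₀ ε ∩ ball (0:ℂ) 1, eLpNorm (μ t) ⊤ volume ≤ C)
    (hholo : ∀ z : ℂ, DifferentiableOn ℂ (fun t => μ t z) (ball 0 1)) :
    ∃ A : ℕ → ℂ → ℂ,
      (∀ n, Measurable (A n) ∧ eLpNorm (A n) ⊤ volume < ⊤) ∧
      limsup (fun n : ℕ => ((eLpNorm (A n) ⊤ volume).toReal) ^ ((n:ℝ)⁻¹)) atTop ≤ 1 ∧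
      ∀ t ∈ ball (0:ℂ) 1,
        Tendsto (fun n : ℕ =>
            eLpNorm (fun z => μ t z - ∑ k ∈ Finset.range (n+1), t ^ k * A k z) ⊤ volume)
          atTop (nhds 0) := by
  classical
  set A : ℕ → ℂ → ℂ :=
    fun n z => (cauchyPowerSeries (fun t => μ t z) 0 (2⁻¹ : ℝ)).coeff n with hAdef
  -- circleMap lands in the unit ball
  have hball : ∀ r : ℝ, 0 < r → r < 1 → ∀ θ : ℝ, circleMap 0 r θ ∈ ball (0:ℂ) 1 := by
    intro r hr0 hr1 θ
    simp [mem_ball, Complex.dist_eq, norm_circleMap_zero, abs_of_pos hr0, hr1]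
  -- continuity of t ↦ μ t z
  have hcont : ∀ z : ℂ, ContinuousOn (fun t => μ t z) (ball (0:ℂ) 1) :=
    fun z => (hholo z).continuousOn
  have hcontc : ∀ (r : ℝ), 0 < r → r < 1 → ∀ z : ℂ,
      Continuous (fun θ : ℝ => μ (circleMap 0 r θ) z) := by
    intro r hr0 hr1 z
    exact (hcont z).comp_continuous (continuous_circleMap 0 r) (hball r hr0 hr1)
  -- power series expansion on each ball of radius r < 1
  have hfp : ∀ r : ℝ, 0 < r → r < 1 → ∀ z : ℂ,
      HasFPowerSeriesOnBall (fun t => μ t z) (cauchyPowerSeries (fun t => μ t z) 0 r) 0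
        (ENNReal.ofReal r) := by
    intro r hr0 hr1 z
    lift r to NNReal using hr0.le
    rw [ENNReal.ofReal_coe_nnreal]
    exact ((hholo z).mono (closedBall_subset_ball (by simpa using hr1))).hasFPowerSeriesOnBall
      (by exact_mod_cast hr0)
  -- the coefficients do not depend on the radius
  have hAcoeff : ∀ r : ℝ, 0 < r → r < 1 → ∀ z : ℂ, ∀ n : ℕ,
      (cauchyPowerSeries (fun t => μ t z) 0 r).coeff n = A n z := by
    intro r hr0 hr1 z n
    have h1 := (hfp r hr0 hr1 z).hasFPowerSeriesAt
    have h2 := (hfp (2⁻¹ : ℝ) (by norm_num) (by norm_num) z).hasFPowerSeriesAt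
    rw [h1.eq_formalMultilinearSeries h2]
  -- joint measurability
  have hjoint : ∀ r : ℝ, 0 < r → r < 1 →
      Measurable (Function.uncurry fun (θ : ℝ) (z : ℂ) => μ (circleMap 0 r θ) z) := by
    intro r hr0 hr1
    exact measurable_uncurry_of_continuous_of_measurable
      (fun z => hcontc r hr0 hr1 z) (fun θ => hmeas _ (hball r hr0 hr1 θ))
  -- measurability of the coefficients
  have hAmeas : ∀ n, Measurable (A n) := by
    have hAint : ∀ (n : ℕ) (z : ℂ), A n z = (2 * (Real.pi:ℂ) * Complex.I)⁻¹ *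
        ∫ θ in Set.Ioc (0:ℝ) (2*Real.pi),
          (circleMap 0 2⁻¹ θ * Complex.I) *
            ((circleMap 0 2⁻¹ θ)⁻¹ ^ n * ((circleMap 0 2⁻¹ θ)⁻¹ * μ (circleMap 0 2⁻¹ θ) z)) := by
      intro n z
      have h0 : A n z = (cauchyPowerSeries (fun t => μ t z) 0 (2⁻¹:ℝ) n fun _ => 1) := rfl
      rw [h0, cauchyPowerSeries_apply]
      simp only [sub_zero, smul_eq_mul, one_div]
      rw [circleIntegral, intervalIntegral.integral_of_le Real.two_pi_pos.le]
      simp only [deriv_circleMap, smul_eq_mul]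
    intro n
    have h1 : Measurable fun p : ℂ × ℝ => μ (circleMap 0 2⁻¹ p.2) p.1 := by
      have h := (hjoint 2⁻¹ (by norm_num) (by norm_num)).comp
        (measurable_swap (α := ℂ) (β := ℝ))
      simp only [Function.comp_def, Function.uncurry_apply_pair] at h
      exact h
    have hcm : Measurable fun θ : ℝ => circleMap 0 2⁻¹ θ := (continuous_circleMap 0 2⁻¹).measurable
    have hFm : Measurable fun p : ℂ × ℝ =>
        (circleMap 0 2⁻¹ p.2 * Complex.I) *
          ((circleMap 0 2⁻¹ p.2)⁻¹ ^ n * ((circleMap 0 2⁻¹ p.2)⁻¹ * μ (circleMap 0 2⁻¹ p.2) p.1)) := by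
      exact ((hcm.comp measurable_snd).mul_const _).mul
        ((((hcm.comp measurable_snd).inv).pow_const n).mul
          (((hcm.comp measurable_snd).inv).mul h1))
    have h2 : Measurable fun z : ℂ => ∫ θ in Set.Ioc (0:ℝ) (2*Real.pi),
        (circleMap 0 2⁻¹ θ * Complex.I) *
          ((circleMap 0 2⁻¹ θ)⁻¹ ^ n * ((circleMap 0 2⁻¹ θ)⁻¹ * μ (circleMap 0 2⁻¹ θ) z)) :=
      (hFm.stronglyMeasurable.integral_prod_right').measurable
    have h3 : A n = fun z => (2 * (Real.pi:ℂ) * Complex.I)⁻¹ *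
        ∫ θ in Set.Ioc (0:ℝ) (2*Real.pi),
          (circleMap 0 2⁻¹ θ * Complex.I) *
            ((circleMap 0 2⁻¹ θ)⁻¹ ^ n * ((circleMap 0 2⁻¹ θ)⁻¹ * μ (circleMap 0 2⁻¹ θ) z)) :=
      funext (hAint n)
    rw [h3]
    exact h2.const_mul _
  -- uniform bound on circles via compactness
  have hCr : ∀ r : ℝ, 0 < r → r < 1 → ∃ C : ENNReal, C < ⊤ ∧
      ∀ θ : ℝ, eLpNorm (μ (circleMap 0 r θ)) ⊤ volume ≤ C := by
    intro r hr0 hr1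
    choose ε hε C hC hCb using hlocbd
    have hsub : sphere (0:ℂ) r ⊆ ball (0:ℂ) 1 := by
      intro x hx
      simp only [mem_sphere, mem_ball] at hx ⊢
      rw [hx]; exact hr1
    have hK : IsCompact (sphere (0:ℂ) r) := isCompact_sphere _ _
    obtain ⟨T, hT⟩ := hK.elim_nhds_subcover' (fun x hx => ball x (ε x (hsub hx)))
      (fun x hx => ball_mem_nhds x (hε x (hsub hx)))
    refine ⟨T.sup (fun x => C x (hsub x.2)), ?_, ?_⟩
    · exact (Finset.sup_lt_iff (by simp)).2 fun x _ => hC _ _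
    · intro θ
      have hθK : circleMap 0 r θ ∈ sphere (0:ℂ) r := circleMap_mem_sphere _ hr0.le _
      obtain ⟨x, hxT, hx⟩ : ∃ x ∈ T, circleMap 0 r θ ∈ ball (x:ℂ) (ε x (hsub x.2)) := by
        simpa using hT hθK
      exact le_trans (hCb x (hsub x.2) _ ⟨hx, hball r hr0 hr1 θ⟩) (Finset.le_sup (f := fun x : ↥(sphere (0:ℂ) r) => C x (hsub x.2)) hxT)
  -- master a.e. bound on coefficients
  have hkey : ∀ r : ℝ, 0 < r → r < 1 → ∃ D : ℝ, 0 ≤ D ∧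
      ∀ᵐ z ∂(volume : Measure ℂ), ∀ n : ℕ, ‖A n z‖ ≤ D * r⁻¹ ^ n := by
    intro r hr0 hr1
    obtain ⟨C, hCt, hCb⟩ := hCr r hr0 hr1
    refine ⟨C.toReal, ENNReal.toReal_nonneg, ?_⟩
    have hjm : Measurable fun p : ℂ × ℝ => μ (circleMap 0 r p.2) p.1 := by
      have h := (hjoint r hr0 hr1).comp (measurable_swap (α := ℂ) (β := ℝ))
      simp only [Function.comp_def, Function.uncurry_apply_pair] at h
      exact h
    have hms : MeasurableSet {x : ℂ × ℝ | ‖μ (circleMap 0 r x.2) x.1‖ ≤ C.toReal} :=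
      measurableSet_le hjm.norm measurable_const
    have hae : ∀ᵐ z ∂(volume : Measure ℂ),
        ∀ᵐ θ ∂(volume.restrict (Set.Ioc (0:ℝ) (2*Real.pi))),
        ‖μ (circleMap 0 r θ) z‖ ≤ C.toReal := by
      rw [Measure.ae_ae_comm hms]
      refine Filter.Eventually.of_forall fun θ => ?_
      have h1 := enorm_ae_le_eLpNormEssSup (μ (circleMap 0 r θ)) volume
      filter_upwards [h1] with z hz
      have h2 : (‖μ (circleMap 0 r θ) z‖₊ : ENNReal) ≤ C :=
        le_trans hz (by rw [← eLpNorm_exponent_top]; exact hCb θ)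
      have h3 := ENNReal.toReal_mono hCt.ne h2
      simpa using h3
    filter_upwards [hae] with z hz
    intro n
    rw [← hAcoeff r hr0 hr1 z n]
    have hc1 : ‖(cauchyPowerSeries (fun t => μ t z) 0 r).coeff n‖ ≤
        ‖cauchyPowerSeries (fun t => μ t z) 0 r n‖ := by
      calc ‖(cauchyPowerSeries (fun t => μ t z) 0 r).coeff n‖
          = ‖cauchyPowerSeries (fun t => μ t z) 0 r n (fun _ => (1:ℂ))‖ := rfl
        _ ≤ ‖cauchyPowerSeries (fun t => μ t z) 0 r n‖ * ∏ _i : Fin n, ‖(1:ℂ)‖ :=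
            ContinuousMultilinearMap.le_opNorm _ _
        _ = ‖cauchyPowerSeries (fun t => μ t z) 0 r n‖ := by simp
    have hc2 := norm_cauchyPowerSeries_le (fun t => μ t z) 0 r n
    have hint : (∫ θ in (0:ℝ)..(2*Real.pi), ‖μ (circleMap 0 r θ) z‖) ≤
        2*Real.pi * C.toReal := by
      rw [intervalIntegral.integral_of_le Real.two_pi_pos.le]
      have hInt : IntegrableOn (fun θ : ℝ => ‖μ (circleMap 0 r θ) z‖)
          (Set.Ioc (0:ℝ) (2*Real.pi)) volume :=
        ((hcontc r hr0 hr1 z).norm).integrableOn_Ioc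
      have hIntc : IntegrableOn (fun _ : ℝ => C.toReal)
          (Set.Ioc (0:ℝ) (2*Real.pi)) volume :=
        integrableOn_const (by rw [Real.volume_Ioc]; exact ENNReal.ofReal_ne_top)
      refine le_trans (integral_mono_ae hInt hIntc hz) ?_
      rw [setIntegral_const, Real.volume_real_Ioc_of_le Real.two_pi_pos.le, sub_zero, smul_eq_mul]
    have habs : |r| = r := abs_of_pos hr0
    have h2pi : ((2*Real.pi)⁻¹ * (2*Real.pi * C.toReal)) = C.toReal := by
      have := Real.pi_ne_zero; field_simp
    calc ‖(cauchyPowerSeries (fun t => μ t z) 0 r).coeff n‖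
        ≤ ‖cauchyPowerSeries (fun t => μ t z) 0 r n‖ := hc1
      _ ≤ ((2*Real.pi)⁻¹ * ∫ θ in (0:ℝ)..(2*Real.pi), ‖μ (circleMap 0 r θ) z‖) * |r|⁻¹ ^ n :=
          hc2
      _ ≤ ((2*Real.pi)⁻¹ * (2*Real.pi * C.toReal)) * |r|⁻¹ ^ n := by
          apply mul_le_mul_of_nonneg_right
          · exact mul_le_mul_of_nonneg_left hint (by positivity)
          · positivity
      _ = C.toReal * r⁻¹ ^ n := by rw [h2pi, habs]
  obtain ⟨D₀, hD₀, haeD₀⟩ := hkey (2⁻¹ : ℝ) (by norm_num) (by norm_num)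
  have hAbd : ∀ n : ℕ, eLpNorm (A n) ⊤ volume ≤ ENNReal.ofReal (D₀ * (2⁻¹ : ℝ)⁻¹ ^ n) := by
    intro n
    rw [eLpNorm_exponent_top]
    exact eLpNormEssSup_le_of_ae_bound (haeD₀.mono fun z hz => hz n)
  refine ⟨A, fun n => ⟨hAmeas n, (hAbd n).trans_lt ENNReal.ofReal_lt_top⟩, ?_, ?_⟩
  · -- limsup bound
    set f : ℕ → ℝ := fun n => ((eLpNorm (A n) ⊤ volume).toReal) ^ ((n:ℝ)⁻¹) with hfdef
    have hf0 : ∀ n, 0 ≤ f n := fun n => Real.rpow_nonneg ENNReal.toReal_nonneg _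
    have hco : IsCoboundedUnder (· ≤ ·) atTop f := isCoboundedUnder_le_of_le atTop hf0
    by_contra hcon
    push_neg at hcon
    obtain ⟨c, hc1, hc2⟩ := exists_between hcon
    have hle : limsup f atTop ≤ c := by
      set b := Real.sqrt c with hbdef
      have hb1 : 1 < b := by
        rw [hbdef, show (1:ℝ) = Real.sqrt 1 from Real.sqrt_one.symm]
        exact Real.sqrt_lt_sqrt (by norm_num) hc1
      have hb0 : (0:ℝ) < b := lt_trans one_pos hb1
      have hbb : b * b = c := Real.mul_self_sqrt (le_of_lt (lt_trans one_pos hc1))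
      have hr0 : 0 < b⁻¹ := by positivity
      have hr1 : b⁻¹ < 1 := by
        rw [inv_lt_one_iff₀]
        exact Or.inr hb1
      obtain ⟨D, hD0, haeD⟩ := hkey b⁻¹ hr0 hr1
      set M := max D 1 with hMdef
      have hM1 : (1:ℝ) ≤ M := le_max_right _ _
      have hM0 : (0:ℝ) < M := lt_of_lt_of_le one_pos hM1
      have hAb : ∀ n : ℕ, (eLpNorm (A n) ⊤ volume).toReal ≤ M * b ^ n := by
        intro n
        have h1 : eLpNorm (A n) ⊤ volume ≤ ENNReal.ofReal (D * (b⁻¹)⁻¹ ^ n) := by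
          rw [eLpNorm_exponent_top]
          exact eLpNormEssSup_le_of_ae_bound (haeD.mono fun z hz => hz n)
        have h2 := ENNReal.toReal_le_of_le_ofReal
          (mul_nonneg hD0 (by positivity)) h1
        rw [inv_inv] at h2
        exact le_trans h2 (mul_le_mul_of_nonneg_right (le_max_left _ _) (by positivity))
      have hfb : ∀ᶠ n : ℕ in atTop, f n ≤ M ^ ((n:ℝ)⁻¹) * b := by
        filter_upwards [eventually_ge_atTop 1] with n hn
        have hn0 : (n:ℝ) ≠ 0 := Nat.cast_ne_zero.2 (by omega)
        calc f n ≤ (M * b ^ n) ^ ((n:ℝ)⁻¹) :=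
              Real.rpow_le_rpow ENNReal.toReal_nonneg (hAb n) (by positivity)
          _ = M ^ ((n:ℝ)⁻¹) * (b ^ n) ^ ((n:ℝ)⁻¹) := Real.mul_rpow hM0.le (by positivity)
          _ = M ^ ((n:ℝ)⁻¹) * b := by
              rw [← Real.rpow_natCast b n, ← Real.rpow_mul hb0.le,
                mul_inv_cancel₀ hn0, Real.rpow_one]
      have htend : Tendsto (fun n : ℕ => M ^ ((n:ℝ)⁻¹)) atTop (nhds 1) := by
        have h1 : Tendsto (fun n : ℕ => (n:ℝ)⁻¹) atTop (nhds 0) :=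
          tendsto_inv_atTop_nhds_zero_nat
        have heq : (fun n : ℕ => M ^ ((n:ℝ)⁻¹)) =
            fun n : ℕ => Real.exp (Real.log M * (n:ℝ)⁻¹) :=
          funext fun n => Real.rpow_def_of_pos hM0 _
        rw [heq]
        have h1' : Tendsto (fun n : ℕ => Real.log M * (n:ℝ)⁻¹) atTop (nhds 0) := by
          simpa using h1.const_mul (Real.log M)
        have h2 := (Real.continuous_exp.tendsto 0).comp h1'
        simpa [mul_zero, Real.exp_zero, Function.comp_def] using h2
      have hev : ∀ᶠ n : ℕ in atTop, M ^ ((n:ℝ)⁻¹) ≤ b :=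
        htend.eventually_le_const hb1
      refine limsup_le_of_le hco ?_
      filter_upwards [hfb, hev] with n h1 h2
      calc f n ≤ M ^ ((n:ℝ)⁻¹) * b := h1
        _ ≤ b * b := mul_le_mul_of_nonneg_right h2 hb0.le
        _ = c := hbb
    exact absurd hle (not_le.2 hc2)
  · -- convergence of partial sums in L^∞
    intro t ht
    have ht' : ‖t‖ < 1 := mem_ball_zero_iff.1 ht
    have ha0 : (0:ℝ) ≤ ‖t‖ := norm_nonneg t
    set r : ℝ := (‖t‖ + 1) / 2 with hrdef
    have hr0 : 0 < r := by rw [hrdef]; positivity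
    have hr1 : r < 1 := by rw [hrdef]; linarith
    have har : ‖t‖ < r := by rw [hrdef]; linarith
    set q : ℝ := ‖t‖ / r with hqdef
    have hq0 : (0:ℝ) ≤ q := by positivity
    have hq1 : q < 1 := by rw [hqdef, div_lt_one hr0]; exact har
    obtain ⟨D, hD0, haeD⟩ := hkey r hr0 hr1
    have hgs : Summable (fun k : ℕ => D * q ^ k) :=
      (summable_geometric_of_lt_one hq0 hq1).mul_left D
    have hbnd : ∀ n : ℕ,
        eLpNorm (fun z => μ t z - ∑ k ∈ Finset.range (n+1), t ^ k * A k z) ⊤ volume ≤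
          ENNReal.ofReal (D * q ^ (n+1) * (1 - q)⁻¹) := by
      intro n
      rw [eLpNorm_exponent_top]
      apply eLpNormEssSup_le_of_ae_bound
      filter_upwards [haeD] with z hz
      have hps := hfp r hr0 hr1 z
      have hmem : t ∈ Metric.eball (0:ℂ) (ENNReal.ofReal r) := by
        rw [Metric.eball_ofReal]; exact mem_ball_zero_iff.2 har
      have hsum0 := hps.hasSum_sub hmem
      have heqf : (fun k => (cauchyPowerSeries (fun s => μ s z) 0 r k) fun _ => t - 0) =
          fun k => t ^ k * A k z := funext fun k => by
        rw [sub_zero, FormalMultilinearSeries.apply_eq_pow_smul_coeff,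
          hAcoeff r hr0 hr1 z k, smul_eq_mul]
      have hsum : HasSum (fun k => t ^ k * A k z) (μ t z) := by
        rw [← heqf]; exact hsum0
      have hterm : ∀ k : ℕ, ‖t ^ k * A k z‖ ≤ D * q ^ k := by
        intro k
        rw [norm_mul, norm_pow]
        have h1 : ‖A k z‖ ≤ D * r⁻¹ ^ k := hz k
        have h2 : q ^ k = ‖t‖ ^ k * r⁻¹ ^ k := by
          rw [hqdef, div_pow, inv_pow, div_eq_mul_inv]
        calc ‖t‖ ^ k * ‖A k z‖ ≤ ‖t‖ ^ k * (D * r⁻¹ ^ k) :=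
              mul_le_mul_of_nonneg_left h1 (by positivity)
          _ = D * q ^ k := by rw [h2]; ring
      have hgs' : Summable fun k : ℕ => D * q ^ (k + (n+1)) :=
        (summable_nat_add_iff (n+1)).2 hgs
      have hsn : Summable fun k : ℕ => ‖t ^ (k + (n+1)) * A (k + (n+1)) z‖ :=
        Summable.of_nonneg_of_le (fun k => norm_nonneg _) (fun k => hterm _) hgs'
      have hrem : μ t z - ∑ k ∈ Finset.range (n+1), t ^ k * A k z =
          ∑' k : ℕ, t ^ (k + (n+1)) * A (k + (n+1)) z := by
        have h1 := Summable.sum_add_tsum_nat_add (f := fun k => t ^ k * A k z) (n+1) hsum.summable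
        rw [← hsum.tsum_eq, ← h1]
        ring
      rw [hrem]
      calc ‖∑' k : ℕ, t ^ (k + (n+1)) * A (k + (n+1)) z‖
          ≤ ∑' k : ℕ, ‖t ^ (k + (n+1)) * A (k + (n+1)) z‖ := norm_tsum_le_tsum_norm hsn
        _ ≤ ∑' k : ℕ, D * q ^ (k + (n+1)) := Summable.tsum_le_tsum (fun k => hterm _) hsn hgs'
        _ = D * q ^ (n+1) * (1 - q)⁻¹ := by
            have heq2 : ∀ k : ℕ, D * q ^ (k + (n+1)) = (D * q ^ (n+1)) * q ^ k := by
              intro k; rw [pow_add]; ring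
            rw [tsum_congr heq2, tsum_mul_left, tsum_geometric_of_lt_one hq0 hq1]
    have htd : Tendsto (fun n : ℕ => ENNReal.ofReal (D * q ^ (n+1) * (1 - q)⁻¹)) atTop
        (nhds 0) := by
      have h2 := tendsto_pow_atTop_nhds_zero_of_lt_one hq0 hq1
      have h3 : Tendsto (fun n : ℕ => q ^ (n+1)) atTop (nhds 0) :=
        h2.comp (tendsto_add_atTop_nat 1)
      have h1 : Tendsto (fun n : ℕ => D * q ^ (n+1) * (1 - q)⁻¹) atTop (nhds 0) := by
        have h4 := (h3.const_mul D).mul_const (1 - q)⁻¹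
        simpa using h4
      have h5 := ENNReal.tendsto_ofReal h1
      simpa using h5
    exact tendsto_of_tendsto_of_tendsto_of_le_of_le tendsto_const_nhds htd
      (fun n => zero_le) hbnd
end

section
/- Counterexample to weak continuity of the Beltrami straightening (Appendix contrex): Fix κ ∈ (0,1) and set K = (1+κ)/(1−κ) and K′ = (1+K)/2 = 1/(1−κ). Define g : ℝ → ℝ by g(x) = ∫₀ˣ w(s) ds, where w(s) = 1 if ⌊s⌋ is even and w(s) = K if ⌊s⌋ is odd, and define f : ℂ → ℂ by f(x+iy) = g(x) + iy. Then: (a) for every z = x+iy ∈ ℂ, f(nz)/f(n) → x + iy/K′ as the integer n → ∞; (b) K′ ≠ (1+κ/2)/(1−κ/2), i.e. the limit map x+iy ↦ x + iy/K′ is not the normalized straightening of the weak limit μ ≡ κ/2 of the Beltrami coefficients. -/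
open Filter

/-- Appendix contrex: counterexample to weak continuity of the Beltrami straightening.
With `f(x+iy) = g(x) + iy` the normalized straightening of the Beltrami form equal to `0`
on vertical strips with even integer part of `Re z` and to `κ` on the odd ones
(`g' = 1` resp. `K = (1+κ)/(1−κ)` there), the rescalings `f(nz)/f(n)` converge to
`x + iy/K'` with `K' = (1+K)/2 = 1/(1−κ)`, whereas the straightening of the weak limit
`κ/2` of the Beltrami coefficients is `x + iy/h(κ/2)` with `h(κ/2) = (1+κ/2)/(1−κ/2) ≠ K'`. -/
theorem weak_continuity_counterexample
    (κ : ℝ) (hκ : κ ∈ Set.Ioo (0:ℝ) 1)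
    (K K' : ℝ) (hK : K = (1 + κ) / (1 - κ)) (hK' : K' = 1 / (1 - κ))
    (w : ℝ → ℝ) (hw : ∀ s : ℝ, w s = if Even ⌊s⌋ then 1 else K)
    (g : ℝ → ℝ) (hg : ∀ x : ℝ, g x = ∫ s in (0:ℝ)..x, w s)
    (f : ℂ → ℂ) (hf : ∀ z : ℂ, f z = (g z.re : ℂ) + (z.im : ℂ) * Complex.I) :
    (∀ z : ℂ, Tendsto (fun n : ℕ => f ((n:ℂ) * z) / f (n:ℂ)) atTop
      (nhds ((z.re : ℂ) + ((z.im / K' : ℝ) : ℂ) * Complex.I))) ∧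
    K' ≠ (1 + κ/2) / (1 - κ/2) := by
  obtain ⟨hκ0, hκ1⟩ := hκ
  have h1κ : (0:ℝ) < 1 - κ := by linarith
  have hK1 : 1 ≤ K := by rw [hK, le_div_iff₀ h1κ]; linarith
  have hK'1 : 1 ≤ K' := by rw [hK', le_div_iff₀ h1κ]; linarith
  have hK'K : K' ≤ K := by
    rw [hK', hK, div_le_div_iff₀ h1κ h1κ]; nlinarith
  have hK'pos : (0:ℝ) < K' := by linarith
  -- bounds on w
  have hwlb : ∀ s, 1 ≤ w s := by
    intro s; rw [hw]; split <;> [exact le_rfl; exact hK1]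
  have hwub : ∀ s, w s ≤ K := by
    intro s; rw [hw]; split <;> [exact hK1; exact le_rfl]
  -- measurability and integrability of w
  have hwm : Measurable w := by
    have : w = (fun k : ℤ => if Even k then (1:ℝ) else K) ∘ Int.floor := by
      funext s; simp [hw, Function.comp]
    rw [this]
    exact (measurable_from_top).comp Int.measurable_floor
  have hwint : ∀ a b : ℝ, IntervalIntegrable w MeasureTheory.volume a b := by
    intro a b
    refine (intervalIntegrable_const (c := K)).mono_fun' (hwm.aestronglyMeasurable.restrict) ?_
    refine Filter.Eventually.of_forall fun s => ?_
    have := hwlb s; have := hwub s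
    simp only [Real.norm_eq_abs]
    rw [abs_of_nonneg (by linarith)]; exact hwub s
  set h : ℝ → ℝ := fun s => w s - K' with hh
  have hhint : ∀ a b : ℝ, IntervalIntegrable h MeasureTheory.volume a b := fun a b =>
    (hwint a b).sub intervalIntegrable_const
  -- periodicity
  have hper : Function.Periodic h 2 := by
    intro s
    have hfl : ⌊s + 2⌋ = ⌊s⌋ + 2 := by
      have := Int.floor_add_intCast s (2:ℤ); push_cast at this ⊢; linarith [this]
    simp only [hh, hw, hfl, Int.even_add]
    norm_num
  -- ∫₀¹ w = 1
  have hne1 : ∀ᵐ s : ℝ, s ≠ (1:ℝ) := MeasureTheory.compl_mem_ae_iff.mpr Real.volume_singleton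
  have e1 : ∫ s in (0:ℝ)..1, w s = 1 := by
    have : ∫ s in (0:ℝ)..1, w s = ∫ s in (0:ℝ)..1, (1:ℝ) := by
      apply intervalIntegral.integral_congr_ae
      filter_upwards [hne1] with s hs hmem
      rw [Set.uIoc_of_le (by norm_num : (0:ℝ) ≤ 1)] at hmem
      rw [hw, if_pos]
      have hfl : ⌊s⌋ = 0 := Int.floor_eq_zero_iff.mpr ⟨hmem.1.le, lt_of_le_of_ne hmem.2 hs⟩
      rw [hfl]; exact Even.zero
    rw [this]; simp
  have hne2 : ∀ᵐ s : ℝ, s ≠ (2:ℝ) := MeasureTheory.compl_mem_ae_iff.mpr Real.volume_singleton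
  have e2 : ∫ s in (1:ℝ)..2, w s = K := by
    have : ∫ s in (1:ℝ)..2, w s = ∫ s in (1:ℝ)..2, (fun _ : ℝ => K) s := by
      apply intervalIntegral.integral_congr_ae
      filter_upwards [hne2] with s hs hmem
      rw [Set.uIoc_of_le (by norm_num : (1:ℝ) ≤ 2)] at hmem
      rw [hw, if_neg]
      have hfl : ⌊s⌋ = 1 := by
        apply Int.floor_eq_iff.mpr
        constructor
        · push_cast; exact hmem.1.le
        · push_cast; have := lt_of_le_of_ne hmem.2 hs; linarith
      rw [hfl]; decide
    rw [this, intervalIntegral.integral_const]; norm_num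
  have e02 : ∫ s in (0:ℝ)..2, w s = 1 + K := by
    rw [← intervalIntegral.integral_add_adjacent_intervals (hwint 0 1) (hwint 1 2), e1, e2]
  have hsum : 2 * K' = 1 + K := by
    rw [hK', hK]; field_simp; ring
  have hper0 : ∫ s in (0:ℝ)..2, h s = 0 := by
    rw [hh]
    rw [intervalIntegral.integral_sub (hwint 0 2) intervalIntegrable_const,
      intervalIntegral.integral_const, e02]
    simp only [smul_eq_mul]
    linarith
  have hperany : ∀ t : ℝ, ∫ s in t..(t + 2), h s = 0 := by
    intro t
    have := hper.intervalIntegral_add_eq t 0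
    rw [this, zero_add]; exact hper0
  -- bound on ∫₀ᵗ h
  have habs : ∀ s, |h s| ≤ K := by
    intro s
    have := hwlb s; have := hwub s
    rw [abs_le]; constructor <;> simp only [hh] <;> linarith
  have hbound : ∀ t : ℝ, |∫ s in (0:ℝ)..t, h s| ≤ 2 * K := by
    intro t
    set n : ℤ := ⌊t / 2⌋ with hn
    set r : ℝ := t - n * 2 with hr
    have hr0 : 0 ≤ r := by
      rw [hr]
      have := Int.floor_le (t / 2)
      rw [hn]; nlinarith [this]
    have hr2 : r ≤ 2 := by
      rw [hr]
      have := Int.lt_floor_add_one (t / 2)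
      rw [hn]; nlinarith [this]
    have hteq : t = r + n • (2:ℝ) := by rw [hr, zsmul_eq_mul]; ring
    have hsplit : ∫ s in (0:ℝ)..t, h s = ∫ s in (0:ℝ)..r, h s := by
      rw [hteq, ← intervalIntegral.integral_add_adjacent_intervals (hhint 0 r) (hhint r (r + n • (2:ℝ)))]
      rw [hper.intervalIntegral_add_zsmul_eq n r hhint, hperany r]
      simp
    rw [hsplit]
    have := intervalIntegral.norm_integral_le_of_norm_le_const
      (a := (0:ℝ)) (b := r) (C := K) (f := h) (fun x _ => by
        simpa [Real.norm_eq_abs] using habs x)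
    simp only [Real.norm_eq_abs] at this
    calc |∫ s in (0:ℝ)..r, h s| ≤ K * |r - 0| := this
      _ ≤ 2 * K := by
          rw [sub_zero, abs_of_nonneg hr0]; nlinarith
  -- g t - K' t is bounded
  have hgK : ∀ t : ℝ, |g t - K' * t| ≤ 2 * K := by
    intro t
    have : g t - K' * t = ∫ s in (0:ℝ)..t, h s := by
      rw [hg, hh, intervalIntegral.integral_sub (hwint 0 t) intervalIntegrable_const,
        intervalIntegral.integral_const]
      simp only [smul_eq_mul, sub_zero]
      ring
    rw [this]; exact hbound t
  -- real rescaled limit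
  have hlim : ∀ c : ℝ, Tendsto (fun n : ℕ => g (n * c) / n) atTop (nhds (K' * c)) := by
    intro c
    rw [← tendsto_sub_nhds_zero_iff]
    apply squeeze_zero_norm' (a := fun n : ℕ => (2 * K) / n)
    · filter_upwards [eventually_ge_atTop 1] with n hn
      have hnpos : (0:ℝ) < n := by exact_mod_cast hn
      have : g (n * c) / n - K' * c = (g (n * c) - K' * (n * c)) / n := by
        field_simp
      rw [Real.norm_eq_abs, this, abs_div, abs_of_pos hnpos]
      exact (div_le_div_iff_of_pos_right hnpos).mpr (hgK _)
    · exact tendsto_const_div_atTop_nhds_zero_nat _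
  -- main limit
  constructor
  · intro z
    have hK'c : ((K':ℂ)) ≠ 0 := by exact_mod_cast hK'pos.ne'
    have key : Tendsto (fun n : ℕ => (((g (n * z.re) / n : ℝ) : ℂ) + (z.im : ℂ) * Complex.I)
        / (((g (n * 1) / n : ℝ) : ℂ))) atTop
        (nhds ((z.re : ℂ) + ((z.im / K' : ℝ) : ℂ) * Complex.I)) := by
      have hnum : Tendsto (fun n : ℕ => (((g (n * z.re) / n : ℝ) : ℂ) + (z.im : ℂ) * Complex.I))
          atTop (nhds (((K' * z.re : ℝ) : ℂ) + (z.im : ℂ) * Complex.I)) := by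
        exact ((Complex.continuous_ofReal.tendsto _).comp (hlim z.re)).add tendsto_const_nhds
      have hden : Tendsto (fun n : ℕ => (((g (n * 1) / n : ℝ) : ℂ))) atTop
          (nhds (((K' * 1 : ℝ) : ℂ))) :=
        (Complex.continuous_ofReal.tendsto _).comp (hlim 1)
      have := hnum.div hden (by
        rw [mul_one]; exact_mod_cast hK'pos.ne')
      convert this using 2
      · rfl
      rw [mul_one]
      push_cast
      field_simp
    apply key.congr'
    filter_upwards [eventually_ge_atTop 1] with n hn
    have hnpos : (0:ℝ) < n := by exact_mod_cast hn
    have hnC : ((n:ℂ)) ≠ 0 := by exact_mod_cast hnpos.ne'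
    rw [hf, hf]
    simp only [Complex.mul_re, Complex.mul_im, Complex.natCast_re, Complex.natCast_im,
      Complex.ofReal_div, Complex.ofReal_natCast, zero_mul, sub_zero, mul_zero, zero_add, add_zero]
    rw [show ((n:ℝ) * 1 : ℝ) = (n:ℝ) by ring]
    field_simp
    push_cast
    ring
  · intro hcontr
    have h2 : (0:ℝ) < 1 - κ/2 := by linarith
    rw [hK'] at hcontr
    rw [div_eq_div_iff h1κ.ne' h2.ne'] at hcontr
    nlinarith [sq_nonneg κ]
end

section
/- Uniform bound on the imaginary part of the logarithmic path integral (claim |Im Ψₙ| ≤ C₀ in the proof of the parallel-transport limit theorem): Let γ : [0,1] → ℂ be continuously differentiable, let m > 0 satisfy |γ′(t)| ≥ m for all t ∈ [0,1], and let η > 0 satisfy |γ′(t) − γ′(u)| ≤ m/10 whenever t, u ∈ [0,1] with |t − u| ≤ η. Then for every s ∈ ℂ with s ∉ γ([0,1]): | Im ∫₀¹ γ′(t)/(γ(t) − s) dt | ≤ ⌈1/η⌉ · (π + arcsin(1/10)). -/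
open Set intervalIntegral

open Set intervalIntegral Real MeasureTheory

namespace ImLogAux3

lemma arg_eq_arctan {z : ℂ} (hre : 0 < z.re) :
    z.arg = Real.arctan (z.im / z.re) := by
  have h1 : |z.arg| ≤ π / 2 := Complex.abs_arg_le_pi_div_two_iff.2 hre.le
  have h2 : z.arg ≠ π / 2 := by
    intro h; rcases Complex.arg_eq_pi_div_two_iff.1 h with ⟨h', _⟩; linarith
  have h3 : z.arg ≠ -(π / 2) := by
    intro h; rcases Complex.arg_eq_neg_pi_div_two_iff.1 h with ⟨h', _⟩; linarith
  have hlt : -(π/2) < z.arg ∧ z.arg < π/2 := by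
    rcases abs_le.1 h1 with ⟨hl, hr⟩
    exact ⟨lt_of_le_of_ne hl (Ne.symm h3), lt_of_le_of_ne hr h2⟩
  rw [← Complex.tan_arg, Real.arctan_tan hlt.1 hlt.2]

lemma arg_lt_arctan {z : ℂ} {p : ℝ} (hre : 0 < z.re) (him : z.im < p * z.re) :
    z.arg < Real.arctan p := by
  rw [arg_eq_arctan hre]
  exact Real.arctan_strictMono ((div_lt_iff₀ hre).2 him)

lemma neg_arctan_lt_arg {z : ℂ} {q : ℝ} (hre : 0 < z.re) (him : -q * z.re < z.im) :
    -Real.arctan q < z.arg := by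
  rw [arg_eq_arctan hre, ← Real.arctan_neg]
  exact Real.arctan_strictMono ((lt_div_iff₀ hre).2 him)

lemma arg_sub_arg_le {z w : ℂ} {R : ℝ} (hR : 0 < R) (hz : R ≤ ‖z‖)
    (hw : R ≤ ‖w‖) (hzw : ‖z - w‖ ≤ R / 10)
    (hzre : 0 < z.re) (hwre : 0 < w.re) :
    |z.arg - w.arg| ≤ Real.arcsin (1/10) := by
  have hz0 : z ≠ 0 := by intro h; rw [h] at hz; simp at hz; linarith
  have hw0 : w ≠ 0 := by intro h; rw [h] at hw; simp at hw; linarith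
  have hza : 0 < ‖z‖ := lt_of_lt_of_le hR hz
  have hwa : 0 < ‖w‖ := lt_of_lt_of_le hR hw
  set θ := z.arg - w.arg with hθ
  have hsin : Real.sin θ = (z.im * w.re - z.re * w.im) / (‖z‖ * ‖w‖) := by
    rw [hθ, Real.sin_sub, Complex.sin_arg, Complex.cos_arg hz0, Complex.sin_arg,
      Complex.cos_arg hw0]
    field_simp
  have hcos : Real.cos θ = (z.re * w.re + z.im * w.im) / (‖z‖ * ‖w‖) := by
    rw [hθ, Real.cos_sub, Complex.sin_arg, Complex.cos_arg hz0, Complex.sin_arg,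
      Complex.cos_arg hw0]
    field_simp
  -- numerator identities via (z-w) * conj w
  have him_eq : z.im * w.re - z.re * w.im = ((z - w) * (starRingEnd ℂ) w).im := by
    simp [Complex.mul_im, Complex.sub_re, Complex.sub_im]; ring
  have hre_eq : z.re * w.re + z.im * w.im
      = ((z - w) * (starRingEnd ℂ) w).re + ‖w‖ ^ 2 := by
    have : (w * (starRingEnd ℂ) w).re = ‖w‖ ^ 2 := by
      rw [Complex.mul_conj, Complex.normSq_eq_norm_sq]; simp [← Complex.ofReal_pow]
    simp [Complex.mul_re, Complex.sub_re, Complex.sub_im] at *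
    nlinarith [this]
  have habs_mul : ‖(z - w) * (starRingEnd ℂ) w‖ ≤ R / 10 * ‖w‖ := by
    rw [norm_mul, Complex.norm_conj]
    exact mul_le_mul_of_nonneg_right hzw hwa.le
  have hnum_im : |z.im * w.re - z.re * w.im| ≤ R / 10 * ‖w‖ := by
    rw [him_eq]
    exact (Complex.abs_im_le_norm _).trans habs_mul
  have hnum_re : 0 < z.re * w.re + z.im * w.im := by
    rw [hre_eq]
    have h1 : |((z - w) * (starRingEnd ℂ) w).re| ≤ R / 10 * ‖w‖ :=
      (Complex.abs_re_le_norm _).trans habs_mul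
    have h2 : R / 10 * ‖w‖ < ‖w‖ ^ 2 := by nlinarith
    rcases abs_le.1 h1 with ⟨h1l, _⟩
    nlinarith
  have hcospos : 0 < Real.cos θ := by
    rw [hcos]; exact div_pos hnum_re (mul_pos hza hwa)
  have hsinle : |Real.sin θ| ≤ 1/10 := by
    rw [hsin, abs_div, abs_of_pos (mul_pos hza hwa)]
    rw [div_le_iff₀ (mul_pos hza hwa)]
    calc |z.im * w.re - z.re * w.im| ≤ R / 10 * ‖w‖ := hnum_im
      _ ≤ 1/10 * (‖z‖ * ‖w‖) := by nlinarith
  have hθabs : |θ| ≤ π := by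
    have h1 : |z.arg| ≤ π / 2 := Complex.abs_arg_le_pi_div_two_iff.2 hzre.le
    have h2 : |w.arg| ≤ π / 2 := Complex.abs_arg_le_pi_div_two_iff.2 hwre.le
    calc |θ| ≤ |z.arg| + |w.arg| := abs_sub _ _
      _ ≤ π := by linarith
  have hθlt : |θ| ≤ π / 2 := by
    by_contra h
    push_neg at h
    have : Real.cos |θ| ≤ 0 :=
      Real.cos_nonpos_of_pi_div_two_le_of_le h.le (by linarith [Real.pi_pos])
    rcases abs_cases θ with ⟨he, _⟩ | ⟨he, _⟩
    · rw [he] at this; linarith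
    · rw [he, Real.cos_neg] at this; linarith
  have hsinabs : Real.sin |θ| ≤ 1/10 := by
    rcases abs_cases θ with ⟨he, _⟩ | ⟨he, _⟩
    · rw [he]; exact (le_abs_self _).trans hsinle
    · rw [he, Real.sin_neg]; exact (neg_le_abs _).trans hsinle
  have := Real.arcsin_sin (by linarith [abs_nonneg θ, Real.pi_pos] : -(π/2) ≤ |θ|)
    (by linarith [hθlt])
  calc |θ| = Real.arcsin (Real.sin |θ|) := this.symm
    _ ≤ Real.arcsin (1/10) := Real.monotone_arcsin hsinabs


lemma slit_of {z : ℂ} (h0 : 0 ≤ z.re) (hz : z ≠ 0) : z ∈ Complex.slitPlane := by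
  rw [Complex.mem_slitPlane_iff]
  rcases h0.lt_or_eq with h | h
  · exact Or.inl h
  · refine Or.inr fun him => hz ?_
    apply Complex.ext <;> simp [← h, him]

variable {f f' : ℝ → ℂ} {a b p q : ℝ}

lemma ftc_log (hab : a ≤ b) (hcont : ContinuousOn f (Icc a b))
    (hd : ∀ t ∈ Ioo a b, HasDerivAt f (f' t) t)
    (hint : IntervalIntegrable (fun t => f' t / f t) volume a b)
    (hsp : ∀ t ∈ Icc a b, f t ∈ Complex.slitPlane) :
    ∫ t in a..b, f' t / f t = Complex.log (f b) - Complex.log (f a) := by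
  apply integral_eq_sub_of_hasDeriv_right_of_le hab
  · exact ContinuousOn.clog hcont hsp
  · intro x hx
    exact ((hd x hx).clog_real (hsp x (Ioo_subset_Icc_self hx))).hasDerivWithinAt
  · exact hint

lemma ftc_comp (hcont : ContinuousOn f (Icc a b))
    (hd : ∀ t ∈ Ioo a b, HasDerivAt f (f' t) t)
    (hc' : ContinuousOn f' (Icc a b))
    {u v : ℝ} (hu : u ∈ Icc a b) (hv : v ∈ Icc a b) (huv : u ≤ v) (L : ℂ →L[ℝ] ℝ) :
    L (f v) - L (f u) = ∫ t in u..v, L (f' t) := by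
  have hsub : Icc u v ⊆ Icc a b := Icc_subset_Icc hu.1 hv.2
  symm
  apply integral_eq_sub_of_hasDeriv_right_of_le huv
  · exact L.continuous.comp_continuousOn (hcont.mono hsub)
  · intro x hx
    have hx' : x ∈ Ioo a b := ⟨lt_of_le_of_lt hu.1 hx.1, lt_of_lt_of_le hx.2 hv.2⟩
    exact (L.hasFDerivAt.comp_hasDerivAt x (hd x hx')).hasDerivWithinAt
  · exact ((L.continuous.comp_continuousOn (hc'.mono hsub)).mono
      (by rw [uIcc_of_le huv])).intervalIntegrable

lemma ftc_re (hcont : ContinuousOn f (Icc a b))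
    (hd : ∀ t ∈ Ioo a b, HasDerivAt f (f' t) t)
    (hc' : ContinuousOn f' (Icc a b))
    {u v : ℝ} (hu : u ∈ Icc a b) (hv : v ∈ Icc a b) (huv : u ≤ v) :
    (f v).re - (f u).re = ∫ t in u..v, (f' t).re := by
  simpa using ftc_comp hcont hd hc' hu hv huv Complex.reCLM

lemma ftc_im (hcont : ContinuousOn f (Icc a b))
    (hd : ∀ t ∈ Ioo a b, HasDerivAt f (f' t) t)
    (hc' : ContinuousOn f' (Icc a b))
    {u v : ℝ} (hu : u ∈ Icc a b) (hv : v ∈ Icc a b) (huv : u ≤ v) :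
    (f v).im - (f u).im = ∫ t in u..v, (f' t).im := by
  simpa using ftc_comp hcont hd hc' hu hv huv Complex.imCLM

lemma corePos (hab : a ≤ b)
    (hcont : ContinuousOn f (Icc a b))
    (hd : ∀ t ∈ Ioo a b, HasDerivAt f (f' t) t)
    (hc' : ContinuousOn f' (Icc a b))
    (hne : ∀ t ∈ Icc a b, f t ≠ 0)
    (hp : 0 ≤ p) (hq : 0 ≤ q)
    (hRe : ∀ t ∈ Icc a b, 0 < (f' t).re)
    (hup : ∀ t ∈ Icc a b, (f' t).im ≤ p * (f' t).re)
    (hlo : ∀ t ∈ Icc a b, -q * (f' t).re ≤ (f' t).im)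
    (hsign : ∀ t ∈ Icc a b, (f t).re = 0 → 0 < (f t).im) :
    |(∫ t in a..b, f' t / f t).im| ≤ π + Real.arctan p + Real.arctan q := by
  have hp' : 0 ≤ Real.arctan p := by
    rw [← Real.arctan_zero]; exact Real.arctan_strictMono.monotone hp
  have hq' : 0 ≤ Real.arctan q := by
    rw [← Real.arctan_zero]; exact Real.arctan_strictMono.monotone hq
  have hπ := Real.pi_pos
  have hdiv : ContinuousOn (fun t => f' t / f t) (Icc a b) := hc'.div hcont hne
  have hint : ∀ u v : ℝ, u ∈ Icc a b → v ∈ Icc a b → u ≤ v →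
      IntervalIntegrable (fun t => f' t / f t) volume u v := fun u v hu hv huv =>
    ((hdiv.mono (Icc_subset_Icc hu.1 hv.2)).mono
      (by rw [uIcc_of_le huv])).intervalIntegrable
  have hreint : ∀ u v : ℝ, u ∈ Icc a b → v ∈ Icc a b → u ≤ v →
      IntervalIntegrable (fun t => (f' t).re) volume u v := fun u v hu hv huv =>
    (((Complex.continuous_re.comp_continuousOn hc').mono (Icc_subset_Icc hu.1 hv.2)).mono
      (by rw [uIcc_of_le huv])).intervalIntegrable
  have himint : ∀ u v : ℝ, u ∈ Icc a b → v ∈ Icc a b → u ≤ v →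
      IntervalIntegrable (fun t => (f' t).im) volume u v := fun u v hu hv huv =>
    (((Complex.continuous_im.comp_continuousOn hc').mono (Icc_subset_Icc hu.1 hv.2)).mono
      (by rw [uIcc_of_le huv])).intervalIntegrable
  -- monotonicity of the real part
  have hmono : ∀ u v : ℝ, u ∈ Icc a b → v ∈ Icc a b → u ≤ v → (f u).re ≤ (f v).re := by
    intro u v hu hv huv
    have h := ftc_re hcont hd hc' hu hv huv
    have : (0:ℝ) ≤ ∫ t in u..v, (f' t).re := by
      apply intervalIntegral.integral_nonneg huv
      intro t ht
      exact (hRe t ⟨le_trans hu.1 ht.1, le_trans ht.2 hv.2⟩).le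
    linarith
  -- key slope inequalities
  have key_up : ∀ u v : ℝ, u ∈ Icc a b → v ∈ Icc a b → u ≤ v →
      (f v).im - (f u).im ≤ p * ((f v).re - (f u).re) := by
    intro u v hu hv huv
    rw [ftc_im hcont hd hc' hu hv huv, ftc_re hcont hd hc' hu hv huv,
      ← intervalIntegral.integral_const_mul]
    apply intervalIntegral.integral_mono_on huv (himint u v hu hv huv)
      ((hreint u v hu hv huv).const_mul p)
    intro t ht
    exact hup t ⟨le_trans hu.1 ht.1, le_trans ht.2 hv.2⟩
  have key_lo : ∀ u v : ℝ, u ∈ Icc a b → v ∈ Icc a b → u ≤ v →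
      -q * ((f v).re - (f u).re) ≤ (f v).im - (f u).im := by
    intro u v hu hv huv
    rw [ftc_im hcont hd hc' hu hv huv, ftc_re hcont hd hc' hu hv huv,
      ← intervalIntegral.integral_const_mul]
    apply intervalIntegral.integral_mono_on huv ((hreint u v hu hv huv).const_mul (-q))
      (himint u v hu hv huv)
    intro t ht
    exact hlo t ⟨le_trans hu.1 ht.1, le_trans ht.2 hv.2⟩
  have ha : a ∈ Icc a b := ⟨le_refl a, hab⟩
  have hb : b ∈ Icc a b := ⟨hab, le_refl b⟩
  rcases le_or_gt 0 (f a).re with hA | hA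
  · -- real part nonnegative throughout
    have hsp : ∀ t ∈ Icc a b, f t ∈ Complex.slitPlane := fun t ht =>
      slit_of (le_trans hA (hmono a t ha ht ht.1)) (hne t ht)
    rw [ftc_log hab hcont hd (hint a b ha hb hab) hsp, Complex.sub_im, Complex.log_im,
      Complex.log_im]
    have h1 : |(f b).arg| ≤ π / 2 :=
      Complex.abs_arg_le_pi_div_two_iff.2 (le_trans hA (hmono a b ha hb hab))
    have h2 : |(f a).arg| ≤ π / 2 := Complex.abs_arg_le_pi_div_two_iff.2 hA
    rcases abs_le.1 h1 with ⟨h1l, h1r⟩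
    rcases abs_le.1 h2 with ⟨h2l, h2r⟩
    rw [abs_le]; constructor <;> linarith
  rcases le_or_gt (f b).re 0 with hB | hB
  · -- real part nonpositive throughout; work with -f
    have heq : (fun t => f' t / f t) = fun t => (-(f' t)) / (-(f t)) := by
      funext t; rw [neg_div_neg_eq]
    have hsp : ∀ t ∈ Icc a b, -(f t) ∈ Complex.slitPlane := by
      intro t ht
      apply slit_of _ (neg_ne_zero.2 (hne t ht))
      have := hmono t b ht hb ht.2
      simp only [Complex.neg_re]
      linarith
    have := ftc_log (f := fun t => -(f t)) (f' := fun t => -(f' t)) hab hcont.neg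
      (fun t ht => (hd t ht).neg) (by rw [← heq]; exact hint a b ha hb hab) hsp
    rw [heq, this, Complex.sub_im, Complex.log_im, Complex.log_im]
    have h1 : |(-(f b)).arg| ≤ π / 2 := by
      apply Complex.abs_arg_le_pi_div_two_iff.2; simp only [Complex.neg_re]; linarith
    have h2 : |(-(f a)).arg| ≤ π / 2 := by
      apply Complex.abs_arg_le_pi_div_two_iff.2
      have := hmono a b ha hb hab
      simp only [Complex.neg_re]; linarith
    rcases abs_le.1 h1 with ⟨h1l, h1r⟩
    rcases abs_le.1 h2 with ⟨h2l, h2r⟩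
    rw [abs_le]; constructor <;> linarith
  · -- crossing case
    have hcre : ContinuousOn (fun t => (f t).re) (Icc a b) :=
      Complex.continuous_re.comp_continuousOn hcont
    obtain ⟨c, hc, hc0⟩ := intermediate_value_Icc hab hcre ⟨hA.le, hB.le⟩
    replace hc0 : (f c).re = 0 := hc0
    have hy : 0 < (f c).im := hsign c hc hc0
    have hsplit := intervalIntegral.integral_add_adjacent_intervals
      (hint a c ha hc hc.1) (hint c b hc hb hc.2)
    -- piece two : from c to b
    have hsp2 : ∀ t ∈ Icc c b, f t ∈ Complex.slitPlane := by
      intro t ht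
      apply slit_of _ (hne t ⟨le_trans hc.1 ht.1, ht.2⟩)
      have := hmono c t hc ⟨le_trans hc.1 ht.1, ht.2⟩ ht.1
      linarith
    have eq2 : ∫ t in c..b, f' t / f t = Complex.log (f b) - Complex.log (f c) :=
      ftc_log hc.2 (hcont.mono (Icc_subset_Icc hc.1 le_rfl))
        (fun t ht => hd t ⟨lt_of_le_of_lt hc.1 ht.1, ht.2⟩) (hint c b hc hb hc.2) hsp2
    have argc : (f c).arg = π / 2 := Complex.arg_eq_pi_div_two_iff.2 ⟨hc0, hy⟩
    have hblo : -Real.arctan q < (f b).arg := by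
      apply neg_arctan_lt_arg hB
      have := key_lo c b hc hb hc.2
      rw [hc0] at this
      nlinarith
    have hbhi : (f b).arg ≤ π / 2 :=
      (abs_le.1 (Complex.abs_arg_le_pi_div_two_iff.2 hB.le)).2
    -- piece one : from a to c, with -f
    have heq : (fun t => f' t / f t) = fun t => (-(f' t)) / (-(f t)) := by
      funext t; rw [neg_div_neg_eq]
    have hsp1 : ∀ t ∈ Icc a c, -(f t) ∈ Complex.slitPlane := by
      intro t ht
      apply slit_of _ (neg_ne_zero.2 (hne t ⟨ht.1, le_trans ht.2 hc.2⟩))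
      have := hmono t c ⟨ht.1, le_trans ht.2 hc.2⟩ hc ht.2
      simp only [Complex.neg_re]; linarith
    have eq1 : ∫ t in a..c, f' t / f t = Complex.log (-(f c)) - Complex.log (-(f a)) := by
      rw [heq]
      exact ftc_log (f := fun t => -(f t)) (f' := fun t => -(f' t)) hc.1
        (hcont.mono (Icc_subset_Icc le_rfl hc.2)).neg
        (fun t ht => (hd t ⟨ht.1, lt_of_lt_of_le ht.2 hc.2⟩).neg)
        (by rw [← heq]; exact hint a c ha hc hc.1) hsp1
    have argc' : (-(f c)).arg = -(π / 2) := by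
      apply Complex.arg_eq_neg_pi_div_two_iff.2
      constructor
      · simp [hc0]
      · simp only [Complex.neg_im]; linarith
    have hahi : (-(f a)).arg < Real.arctan p := by
      apply arg_lt_arctan
      · simp only [Complex.neg_re]; linarith
      · have := key_up a c ha hc hc.1
        rw [hc0] at this
        simp only [Complex.neg_im, Complex.neg_re]
        nlinarith
    have halo : -(π / 2) ≤ (-(f a)).arg := by
      have : |(-(f a)).arg| ≤ π / 2 := by
        apply Complex.abs_arg_le_pi_div_two_iff.2
        simp only [Complex.neg_re]; linarith
      exact (abs_le.1 this).1
    rw [← hsplit, Complex.add_im, eq1, eq2, Complex.sub_im, Complex.sub_im,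
      Complex.log_im, Complex.log_im, Complex.log_im, Complex.log_im, argc, argc']
    rw [abs_le]
    constructor <;> linarith

lemma intervalIntegral_conj {h : ℝ → ℂ} {a b : ℝ} :
    ∫ t in a..b, (starRingEnd ℂ) (h t) = (starRingEnd ℂ) (∫ t in a..b, h t) := by
  simp only [intervalIntegral, ← integral_conj, map_sub]

lemma core (hab : a ≤ b)
    (hcont : ContinuousOn f (Icc a b))
    (hd : ∀ t ∈ Ioo a b, HasDerivAt f (f' t) t)
    (hc' : ContinuousOn f' (Icc a b))
    (hne : ∀ t ∈ Icc a b, f t ≠ 0)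
    (hp : 0 ≤ p) (hq : 0 ≤ q)
    (hRe : ∀ t ∈ Icc a b, 0 < (f' t).re)
    (hup : ∀ t ∈ Icc a b, (f' t).im ≤ p * (f' t).re)
    (hlo : ∀ t ∈ Icc a b, -q * (f' t).re ≤ (f' t).im) :
    |(∫ t in a..b, f' t / f t).im| ≤ π + Real.arctan p + Real.arctan q := by
  by_cases hex : ∃ t₀ ∈ Icc a b, (f t₀).re = 0 ∧ (f t₀).im < 0
  · obtain ⟨t₀, ht₀, h00, hneg⟩ := hex
    have hreint : ∀ u v : ℝ, u ∈ Icc a b → v ∈ Icc a b → u ≤ v →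
        IntervalIntegrable (fun t => (f' t).re) volume u v := fun u v hu hv huv =>
      (((Complex.continuous_re.comp_continuousOn hc').mono (Icc_subset_Icc hu.1 hv.2)).mono
        (by rw [uIcc_of_le huv])).intervalIntegrable
    have hstrict : ∀ u v : ℝ, u ∈ Icc a b → v ∈ Icc a b → u < v → (f u).re < (f v).re := by
      intro u v hu hv huv
      have h := ftc_re hcont hd hc' hu hv huv.le
      have hpos : 0 < ∫ t in u..v, (f' t).re := by
        apply intervalIntegral.intervalIntegral_pos_of_pos_on (hreint u v hu hv huv.le) _ huv
        intro x hx
        exact hRe x ⟨le_trans hu.1 hx.1.le, le_trans hx.2.le hv.2⟩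
      linarith
    have hres := corePos (f := fun t => (starRingEnd ℂ) (f t))
        (f' := fun t => (starRingEnd ℂ) (f' t)) (p := q) (q := p) hab
        (Complex.continuous_conj.comp_continuousOn hcont)
        (fun t ht => by
          have := (Complex.conjCLE.toContinuousLinearMap.hasFDerivAt
            (x := f t)).comp_hasDerivAt t (hd t ht)
          exact this)
        (Complex.continuous_conj.comp_continuousOn hc')
        (fun t ht => by simpa using hne t ht)
        hq hp
        (fun t ht => by simpa using hRe t ht)
        (fun t ht => by
          have := hlo t ht
          simp only [Complex.conj_im, Complex.conj_re]
          linarith)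
        (fun t ht => by
          have := hup t ht
          simp only [Complex.conj_im, Complex.conj_re]
          linarith)
        (fun t ht h0 => by
          simp only [Complex.conj_re] at h0
          have ht0 : t = t₀ := by
            rcases lt_trichotomy t t₀ with h | h | h
            · exfalso; have := hstrict t t₀ ht ht₀ h; rw [h0, h00] at this; exact lt_irrefl _ this
            · exact h
            · exfalso; have := hstrict t₀ t ht₀ ht h; rw [h0, h00] at this; exact lt_irrefl _ this
          simp only [Complex.conj_im]
          rw [ht0]; linarith)
    have heq : (∫ t in a..b, (starRingEnd ℂ) (f' t) / (starRingEnd ℂ) (f t))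
        = (starRingEnd ℂ) (∫ t in a..b, f' t / f t) := by
      simp only [← map_div₀]
      exact intervalIntegral_conj
    rw [heq] at hres
    simp only [Complex.conj_im, abs_neg] at hres
    linarith
  · push_neg at hex
    apply corePos hab hcont hd hc' hne hp hq hRe hup hlo
    intro t ht h0
    have him : (f t).im ≠ 0 := by
      intro h
      exact hne t ht (Complex.ext h0 h)
    exact lt_of_le_of_ne (hex t ht h0) (Ne.symm him)

lemma sub_bound {γ γ' : ℝ → ℂ}
    (hderiv : ∀ t ∈ Icc (0:ℝ) 1, HasDerivWithinAt γ (γ' t) (Icc 0 1) t)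
    (hcont' : ContinuousOn γ' (Icc (0:ℝ) 1))
    {m : ℝ} (hm : 0 < m)
    (hlow : ∀ t ∈ Icc (0:ℝ) 1, m ≤ ‖γ' t‖)
    {s : ℂ} (hs : ∀ t ∈ Icc (0:ℝ) 1, γ t - s ≠ 0)
    {a b : ℝ} (ha0 : 0 ≤ a) (hab : a ≤ b) (hb1 : b ≤ 1)
    (hosc : ∀ t ∈ Icc a b, ∀ u ∈ Icc a b, ‖γ' t - γ' u‖ ≤ m / 10) :
    |(∫ t in a..b, γ' t / (γ t - s)).im| ≤ π + Real.arcsin (1/10) := by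
  have hsub : Icc a b ⊆ Icc (0:ℝ) 1 := Icc_subset_Icc ha0 hb1
  have haab : a ∈ Icc a b := ⟨le_rfl, hab⟩
  have hcam : m ≤ ‖γ' a‖ := hlow a (hsub haab)
  have hcapos : 0 < ‖γ' a‖ := lt_of_lt_of_le hm hcam
  have hca0 : γ' a ≠ 0 := by
    intro h; rw [h] at hcapos; simp at hcapos
  set c : ℂ := (starRingEnd ℂ) (γ' a) with hcdef
  have hc0 : c ≠ 0 := by simpa [hcdef] using hca0
  set g' : ℝ → ℂ := fun t => c * γ' t with hg'def
  set g : ℝ → ℂ := fun t => c * (γ t - s) with hgdef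
  have h1 : c * γ' a = ((‖γ' a‖ ^ 2 : ℝ) : ℂ) := by
    rw [hcdef, mul_comm, Complex.mul_conj, Complex.normSq_eq_norm_sq]
  have hgrepos : ∀ t ∈ Icc a b, 0 < (g' t).re := by
    intro t ht
    have h2 : (c * (γ' a - γ' t)).re ≤ ‖γ' a‖ * (m / 10) := by
      calc (c * (γ' a - γ' t)).re ≤ ‖c * (γ' a - γ' t)‖ := Complex.re_le_norm _
        _ = ‖γ' a‖ * ‖γ' a - γ' t‖ := by
            rw [norm_mul, hcdef, Complex.norm_conj]
        _ ≤ ‖γ' a‖ * (m / 10) :=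
            mul_le_mul_of_nonneg_left (hosc a haab t ht) hcapos.le
    have h3 : (c * (γ' a - γ' t)).re = (c * γ' a).re - (g' t).re := by
      simp [hg'def, mul_sub, Complex.sub_re]
    have h4 : (c * γ' a).re = ‖γ' a‖ ^ 2 := by
      rw [h1]; simp [← Complex.ofReal_pow]
    have h5 : ‖γ' a‖ ^ 2 ≥ ‖γ' a‖ * m := by nlinarith
    have : (g' t).re ≥ ‖γ' a‖ * m - ‖γ' a‖ * (m/10) := by linarith
    nlinarith
  have hg'cont : ContinuousOn g' (Icc a b) := continuousOn_const.mul (hcont'.mono hsub)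
  set σ : ℝ → ℝ := fun t => (g' t).im / (g' t).re with hσdef
  have hσcont : ContinuousOn σ (Icc a b) :=
    (Complex.continuous_im.comp_continuousOn hg'cont).div
      (Complex.continuous_re.comp_continuousOn hg'cont) (fun t ht => (hgrepos t ht).ne')
  obtain ⟨tp, htp, hmax⟩ := isCompact_Icc.exists_isMaxOn (Set.nonempty_Icc.2 hab) hσcont
  obtain ⟨tm, htm, hmin⟩ := isCompact_Icc.exists_isMinOn (Set.nonempty_Icc.2 hab) hσcont
  set p : ℝ := σ tp with hpdef
  set q : ℝ := -σ tm with hqdef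
  have him0 : (c * γ' a).im = 0 := by rw [h1]; simp [← Complex.ofReal_pow]
  have hσa : σ a = 0 := by
    simp only [hσdef, hg'def]
    simp [him0]
  have hp : 0 ≤ p := by
    have h := hmax haab
    simp only [Set.mem_setOf_eq] at h
    rw [hσa] at h; exact h
  have hq : 0 ≤ q := by
    have h := hmin haab
    simp only [Set.mem_setOf_eq] at h
    rw [hσa] at h; simp only [hqdef]; linarith
  have hup : ∀ t ∈ Icc a b, (g' t).im ≤ p * (g' t).re := by
    intro t ht
    have h := hmax ht
    simp only [Set.mem_setOf_eq] at h
    exact (div_le_iff₀ (hgrepos t ht)).1 h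
  have hlo' : ∀ t ∈ Icc a b, -q * (g' t).re ≤ (g' t).im := by
    intro t ht
    have h := hmin ht
    simp only [Set.mem_setOf_eq] at h
    have := (le_div_iff₀ (hgrepos t ht)).1 h
    simpa [hqdef] using this
  -- the angle bound
  have habsz : ∀ t ∈ Icc a b, ‖γ' a‖ * m ≤ ‖g' t‖ := by
    intro t ht
    rw [hg'def]
    simp only [norm_mul, hcdef, Complex.norm_conj]
    exact mul_le_mul_of_nonneg_left (hlow t (hsub ht)) hcapos.le
  have harc : Real.arctan p + Real.arctan q ≤ Real.arcsin (1/10) := by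
    have hargz : (g' tp).arg = Real.arctan p := by
      rw [arg_eq_arctan (hgrepos tp htp)]
    have hargw : (g' tm).arg = -Real.arctan q := by
      rw [arg_eq_arctan (hgrepos tm htm), ← Real.arctan_neg]
      congr 1
      rw [hqdef]; ring
    have hzw : ‖g' tp - g' tm‖ ≤ ‖γ' a‖ * m / 10 := by
      have : g' tp - g' tm = c * (γ' tp - γ' tm) := by rw [hg'def]; ring
      rw [this, norm_mul, hcdef, Complex.norm_conj]
      calc ‖γ' a‖ * ‖γ' tp - γ' tm‖
          ≤ ‖γ' a‖ * (m / 10) :=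
            mul_le_mul_of_nonneg_left (hosc tp htp tm htm) hcapos.le
        _ = ‖γ' a‖ * m / 10 := by ring
    have := arg_sub_arg_le (R := ‖γ' a‖ * m) (by positivity)
      (habsz tp htp) (habsz tm htm) hzw (hgrepos tp htp) (hgrepos tm htm)
    rw [hargz, hargw] at this
    calc Real.arctan p + Real.arctan q = Real.arctan p - -Real.arctan q := by ring
      _ ≤ |Real.arctan p - -Real.arctan q| := le_abs_self _
      _ ≤ Real.arcsin (1/10) := this
  -- apply the core lemma
  have hγc : ContinuousOn γ (Icc (0:ℝ) 1) := fun t ht => (hderiv t ht).continuousWithinAt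
  have hcontg : ContinuousOn g (Icc a b) :=
    continuousOn_const.mul ((hγc.mono hsub).sub continuousOn_const)
  have hdg : ∀ t ∈ Ioo a b, HasDerivAt g (g' t) t := by
    intro t ht
    have ht01 : t ∈ Ioo (0:ℝ) 1 := ⟨lt_of_le_of_lt ha0 ht.1, lt_of_lt_of_le ht.2 hb1⟩
    have h := (hderiv t (Ioo_subset_Icc_self ht01)).hasDerivAt
      (Icc_mem_nhds ht01.1 ht01.2)
    exact (h.sub_const s).const_mul c
  have hneg : ∀ t ∈ Icc a b, g t ≠ 0 := fun t ht => mul_ne_zero hc0 (hs t (hsub ht))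
  have hres := core hab hcontg hdg hg'cont hneg hp hq hgrepos hup hlo'
  have hinteq : ∀ t : ℝ, g' t / g t = γ' t / (γ t - s) := by
    intro t
    rw [hg'def, hgdef]
    exact mul_div_mul_left _ _ hc0
  simp only [hinteq] at hres
  linarith


private theorem main
    (γ γ' : ℝ → ℂ)
    (hderiv : ∀ t ∈ Set.Icc (0:ℝ) 1, HasDerivWithinAt γ (γ' t) (Set.Icc 0 1) t)
    (hcont : ContinuousOn γ' (Set.Icc 0 1))
    (m : ℝ) (hm : 0 < m)
    (hlow : ∀ t ∈ Set.Icc (0:ℝ) 1, m ≤ ‖γ' t‖)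
    (η : ℝ) (hη : 0 < η)
    (hmod : ∀ t ∈ Set.Icc (0:ℝ) 1, ∀ u ∈ Set.Icc (0:ℝ) 1, |t - u| ≤ η →
      ‖γ' t - γ' u‖ ≤ m / 10) :
    ∀ s : ℂ, s ∉ γ '' Set.Icc 0 1 →
      |(∫ t in (0:ℝ)..1, γ' t / (γ t - s)).im| ≤
        ((⌈1/η⌉ : ℤ) : ℝ) * (Real.pi + Real.arcsin (1/10)) := by
  intro s hsim
  have hs : ∀ t ∈ Icc (0:ℝ) 1, γ t - s ≠ 0 := by
    intro t ht h
    exact hsim ⟨t, ht, by linear_combination h⟩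
  have hγc : ContinuousOn γ (Icc (0:ℝ) 1) := fun t ht => (hderiv t ht).continuousWithinAt
  have hintC : ContinuousOn (fun t => γ' t / (γ t - s)) (Icc (0:ℝ) 1) :=
    hcont.div (hγc.sub continuousOn_const) hs
  set n : ℕ := (⌈1/η⌉ : ℤ).toNat with hndef
  have hceil : (0:ℤ) < ⌈1/η⌉ := Int.ceil_pos.2 (by positivity)
  have hn : (n:ℝ) = ((⌈1/η⌉ : ℤ) : ℝ) := by
    rw [hndef]
    exact_mod_cast congrArg (Int.cast : ℤ → ℝ) (Int.toNat_of_nonneg hceil.le)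
  have hn0 : 0 < n := by omega
  have hnR : (0:ℝ) < n := by exact_mod_cast hn0
  have hle : 1/η ≤ (n:ℝ) := by rw [hn]; exact Int.le_ceil _
  have hηn : 1/(n:ℝ) ≤ η := by
    rw [div_le_iff₀ hnR]
    rw [div_le_iff₀ hη] at hle
    linarith
  set aseq : ℕ → ℝ := fun i => (i:ℝ)/(n:ℝ) with haseq
  have haseqle : ∀ i j : ℕ, i ≤ j → aseq i ≤ aseq j := by
    intro i j hij
    simp only [haseq]
    gcongr
  have haseq0 : ∀ i : ℕ, 0 ≤ aseq i := fun i => by positivity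
  have haseq1 : ∀ i : ℕ, i ≤ n → aseq i ≤ 1 := by
    intro i hi
    simp only [haseq]
    rw [div_le_one hnR]
    exact_mod_cast hi
  have hsubIcc : ∀ i : ℕ, i < n → Icc (aseq i) (aseq (i+1)) ⊆ Icc (0:ℝ) 1 := by
    intro i hi
    exact Icc_subset_Icc (haseq0 i) (haseq1 (i+1) hi)
  have hIntInt : ∀ i < n, IntervalIntegrable (fun t => γ' t / (γ t - s)) volume
      (aseq i) (aseq (i+1)) := by
    intro i hi
    exact ((hintC.mono (hsubIcc i hi)).mono
      (by rw [uIcc_of_le (haseqle i (i+1) (Nat.le_succ i))])).intervalIntegrable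
  have hsum := intervalIntegral.sum_integral_adjacent_intervals hIntInt
  have ha0 : aseq 0 = 0 := by simp [haseq]
  have han : aseq n = 1 := by
    simp only [haseq]
    exact div_self hnR.ne'
  have hsplit : (∫ t in (0:ℝ)..1, γ' t / (γ t - s))
      = ∑ k ∈ Finset.range n, ∫ t in aseq k..aseq (k+1), γ' t / (γ t - s) := by
    rw [hsum, ha0, han]
  have hlen : ∀ i : ℕ, aseq (i+1) - aseq i = 1/(n:ℝ) := by
    intro i
    simp only [haseq]
    push_cast
    field_simp
    ring
  have hbound : ∀ i ∈ Finset.range n,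
      |(∫ t in aseq i..aseq (i+1), γ' t / (γ t - s)).im| ≤ π + Real.arcsin (1/10) := by
    intro i hi
    rw [Finset.mem_range] at hi
    apply sub_bound hderiv hcont hm hlow hs (haseq0 i) (haseqle i (i+1) (Nat.le_succ i))
      (haseq1 (i+1) hi)
    intro t ht u hu
    apply hmod t (hsubIcc i hi ht) u (hsubIcc i hi hu)
    have h1 := hlen i
    have := ht.1; have := ht.2; have := hu.1; have := hu.2
    have habs : |t - u| ≤ 1/(n:ℝ) := by
      rw [abs_le]; constructor <;> linarith
    linarith
  rw [hsplit, Complex.im_sum]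
  calc |∑ k ∈ Finset.range n, (∫ t in aseq k..aseq (k+1), γ' t / (γ t - s)).im|
      ≤ ∑ k ∈ Finset.range n, |(∫ t in aseq k..aseq (k+1), γ' t / (γ t - s)).im| :=
        Finset.abs_sum_le_sum_abs _ _
    _ ≤ ∑ _k ∈ Finset.range n, (π + Real.arcsin (1/10)) := Finset.sum_le_sum hbound
    _ = (n:ℝ) * (π + Real.arcsin (1/10)) := by
        rw [Finset.sum_const, Finset.card_range, nsmul_eq_mul]
    _ = ((⌈1/η⌉ : ℤ) : ℝ) * (π + Real.arcsin (1/10)) := by rw [hn]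

end ImLogAux3

/-- Uniform bound on the imaginary part of the logarithmic path integral
`Ψ(s) = ∫₀¹ γ′(t)/(γ(t)−s) dt` for a C¹ path whose derivative is bounded below by `m` and
has oscillation at most `m/10` at scale `η`. -/
theorem im_log_integral_bound
    (γ γ' : ℝ → ℂ)
    (hderiv : ∀ t ∈ Set.Icc (0:ℝ) 1, HasDerivWithinAt γ (γ' t) (Set.Icc 0 1) t)
    (hcont : ContinuousOn γ' (Set.Icc 0 1))
    (m : ℝ) (hm : 0 < m)
    (hlow : ∀ t ∈ Set.Icc (0:ℝ) 1, m ≤ ‖γ' t‖)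
    (η : ℝ) (hη : 0 < η)
    (hmod : ∀ t ∈ Set.Icc (0:ℝ) 1, ∀ u ∈ Set.Icc (0:ℝ) 1, |t - u| ≤ η →
      ‖γ' t - γ' u‖ ≤ m / 10) :
    ∀ s : ℂ, s ∉ γ '' Set.Icc 0 1 →
      |(∫ t in (0:ℝ)..1, γ' t / (γ t - s)).im| ≤
        ((⌈1/η⌉ : ℤ) : ℝ) * (Real.pi + Real.arcsin (1/10)) := by
  exact ImLogAux3.main γ γ' hderiv hcont m hm hlow η hη hmod
end

section
/- Logarithmic-sum bound for separated points near a basepoint (counting estimate in the proof of the parallel-transport limit theorem): Let z₀ ∈ ℂ, let 0 < ρ ≤ 1, let 0 < δ < ε ≤ 1, and let S be a finite set of points of ℂ such that: every s ∈ S satisfies ρ ≤ |s − z₀| ≤ ε, and the open disks B(s, δ), s ∈ S, are pairwise disjoint. Then Σ_{s ∈ S} log(1/|z₀ − s|) ≤ log(1/ρ) + 9π·(2ε/δ)²·( (4/9)·log 2 + (1/3)·log(1/ε) ). -/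
open Metric ENNReal

open MeasureTheory in
/-- Packing bound: if the points of `T` lie within distance `R` of `z₀` and carry
pairwise disjoint balls of radius `δ ≤ R`, then `#T ≤ (2R/δ)²`. -/
lemma aux_count_le (z₀ : ℂ) (δ R : ℝ) (hδ : 0 < δ) (hδR : δ ≤ R)
    (T : Finset ℂ) (hT : ∀ s ∈ T, ‖z₀ - s‖ ≤ R)
    (hdisj : Set.PairwiseDisjoint (T : Set ℂ) (fun s => Metric.ball s δ)) :
    (T.card : ℝ) ≤ (2 * R / δ) ^ 2 := by
  have hsub : ∀ s ∈ T, Metric.ball s δ ⊆ Metric.ball z₀ (2 * R) := by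
    intro s hs w hw
    have h1 : dist w s < δ := mem_ball.mp hw
    have h2 : dist s z₀ ≤ R := by
      rw [Complex.dist_eq]
      have := hT s hs
      rwa [← norm_neg, neg_sub] at this
    have := dist_triangle w s z₀
    have : dist w z₀ < 2 * R := by linarith
    exact mem_ball.mpr this
  have hvol : (T.card : ℝ≥0∞) * (ENNReal.ofReal δ ^ 2 * NNReal.pi) ≤
      ENNReal.ofReal (2 * R) ^ 2 * NNReal.pi := by
    calc (T.card : ℝ≥0∞) * (ENNReal.ofReal δ ^ 2 * NNReal.pi)
        = ∑ s ∈ T, volume (Metric.ball s δ) := by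
          simp [Complex.volume_ball, Finset.sum_const, nsmul_eq_mul]
      _ = volume (⋃ s ∈ T, Metric.ball s δ) :=
          (measure_biUnion_finset hdisj (fun s _ => measurableSet_ball)).symm
      _ ≤ volume (Metric.ball z₀ (2 * R)) :=
          measure_mono (Set.iUnion₂_subset hsub)
      _ = ENNReal.ofReal (2 * R) ^ 2 * NNReal.pi := Complex.volume_ball _ _
  have hπ0 : (NNReal.pi : ℝ≥0∞) ≠ 0 := by
    simp [← NNReal.coe_eq_zero, Real.pi_ne_zero]
  have hπt : (NNReal.pi : ℝ≥0∞) ≠ ⊤ := ENNReal.coe_ne_top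
  rw [← mul_assoc] at hvol
  have hvol2 : (T.card : ℝ≥0∞) * ENNReal.ofReal δ ^ 2 ≤ ENNReal.ofReal (2 * R) ^ 2 :=
    (ENNReal.mul_le_mul_iff_left hπ0 hπt).mp hvol
  have hδ2 : (0:ℝ) < δ ^ 2 := by positivity
  have hkey : (T.card : ℝ) * δ ^ 2 ≤ (2 * R) ^ 2 := by
    have : ENNReal.ofReal ((T.card : ℝ) * δ ^ 2) ≤ ENNReal.ofReal ((2 * R) ^ 2) := by
      rw [ENNReal.ofReal_mul (by positivity), ENNReal.ofReal_pow hδ.le,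
        ENNReal.ofReal_pow (by linarith), ENNReal.ofReal_natCast]
      exact hvol2
    exact (ENNReal.ofReal_le_ofReal_iff (by positivity)).mp this
  rw [div_pow, le_div_iff₀ hδ2]
  exact hkey

lemma aux_geom_le (x : ℝ) (h0 : 0 ≤ x) (h1 : x < 1) (K : ℕ) :
    ∑ j ∈ Finset.range K, x ^ j ≤ 1 / (1 - x) := by
  have hxK : 0 ≤ x ^ K := pow_nonneg h0 K
  have h2 : 0 < 1 - x := by linarith
  rw [geom_sum_eq h1.ne]
  have e : (x ^ K - 1) / (x - 1) = (1 - x ^ K) / (1 - x) := by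
    rw [← neg_div_neg_eq]; ring_nf
  rw [e, div_le_div_iff₀ h2 h2]
  nlinarith

/-- Logarithmic-sum bound for separated points near a basepoint: if the points of a
finite set `S` lie at distance between `ρ` and `ε` from `z₀` and carry pairwise disjoint
disks of radius `δ`, then `Σ_{s∈S} log(1/|z₀−s|)` is bounded by
`log(1/ρ) + 9π(2ε/δ)²((4/9)log 2 + (1/3)log(1/ε))`. -/
theorem log_sum_separated_points
    (z₀ : ℂ) (ρ δ ε : ℝ)
    (hρ0 : 0 < ρ) (hρ1 : ρ ≤ 1)
    (hδ0 : 0 < δ) (hδε : δ < ε) (hε1 : ε ≤ 1)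
    (S : Finset ℂ)
    (hmem : ∀ s ∈ S, ρ ≤ ‖s - z₀‖ ∧ ‖s - z₀‖ ≤ ε)
    (hdisj : Set.PairwiseDisjoint (S : Set ℂ) (fun s => Metric.ball s δ)) :
    ∑ s ∈ S, Real.log (1 / ‖z₀ - s‖) ≤
      Real.log (1 / ρ) + 9 * Real.pi * (2 * ε / δ)^2 *
        ((4 / 9) * Real.log 2 + (1 / 3) * Real.log (1 / ε)) := by
  classical
  have hε0 : (0:ℝ) < ε := lt_trans hδ0 hδε
  have hπ : (3:ℝ) ≤ Real.pi := by linarith [Real.pi_gt_three]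
  have hlogε : 0 ≤ Real.log (1 / ε) := Real.log_nonneg (by
    rw [le_div_iff₀ hε0]; linarith)
  have hlog2 : (0:ℝ) ≤ Real.log 2 := Real.log_nonneg one_le_two
  have hlogρ : 0 ≤ Real.log (1 / ρ) := Real.log_nonneg (by
    rw [le_div_iff₀ hρ0]; linarith)
  set r : ℂ → ℝ := fun s => ‖z₀ - s‖ with hrdef
  have hrmem : ∀ s ∈ S, ρ ≤ r s ∧ r s ≤ ε := by
    intro s hs
    have h := hmem s hs
    have he : ‖s - z₀‖ = r s := norm_sub_rev s z₀
    rw [he] at h; exact h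
  have hr0 : ∀ s ∈ S, 0 < r s := fun s hs => lt_of_lt_of_le hρ0 (hrmem s hs).1
  set f : ℂ → ℝ := fun s => Real.log (1 / ‖z₀ - s‖) with hfdef
  have hfnn : ∀ s ∈ S, 0 ≤ f s := by
    intro s hs
    exact Real.log_nonneg (by
      rw [le_div_iff₀ (hr0 s hs)]; simpa using (hrmem s hs).2.trans hε1)
  -- split off the (at most one) point inside B(z₀, δ)
  set S₁ := S.filter (fun s => r s < δ) with hS₁def
  set S₂ := S.filter (fun s => ¬ r s < δ) with hS₂def
  have hsplit : ∑ s ∈ S, f s = ∑ s ∈ S₁, f s + ∑ s ∈ S₂, f s :=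
    (Finset.sum_filter_add_sum_filter_not S _ f).symm
  have hS₁sum : ∑ s ∈ S₁, f s ≤ Real.log (1 / ρ) := by
    rcases Finset.eq_empty_or_nonempty S₁ with h | ⟨a, ha⟩
    · rw [h, Finset.sum_empty]; exact hlogρ
    · have haS : a ∈ S := Finset.mem_filter.mp ha |>.1
      have har : r a < δ := (Finset.mem_filter.mp ha).2
      have hcard : S₁ = {a} := by
        apply Finset.eq_singleton_iff_unique_mem.mpr
        refine ⟨ha, fun b hb => ?_⟩
        by_contra hne
        have hbS : b ∈ S := Finset.mem_filter.mp hb |>.1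
        have hbr : r b < δ := (Finset.mem_filter.mp hb).2
        have hd : Disjoint (Metric.ball b δ) (Metric.ball a δ) :=
          hdisj (Finset.mem_coe.mpr hbS) (Finset.mem_coe.mpr haS) hne
        have hz₀b : z₀ ∈ Metric.ball b δ := by
          rw [mem_ball, Complex.dist_eq]; exact hbr
        have hz₀a : z₀ ∈ Metric.ball a δ := by
          rw [mem_ball, Complex.dist_eq]; exact har
        exact Set.disjoint_left.mp hd hz₀b hz₀a
      rw [hcard, Finset.sum_singleton]
      have : 1 / r a ≤ 1 / ρ :=
        one_div_le_one_div_of_le hρ0 (hrmem a haS).1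
      exact Real.log_le_log (one_div_pos.mpr (hr0 a haS)) this
  -- the dyadic decomposition for the remaining points
  set j : ℂ → ℕ := fun s => ⌊Real.logb 2 (ε / r s)⌋₊ with hjdef
  set K : ℕ := ⌈ε / δ⌉₊ + 1 with hKdef
  have hS₂mem : ∀ s ∈ S₂, δ ≤ r s ∧ r s ≤ ε := by
    intro s hs
    have h1 := Finset.mem_filter.mp hs
    exact ⟨not_lt.mp h1.2, (hrmem s h1.1).2⟩
  have hS₂S : ∀ s ∈ S₂, s ∈ S := fun s hs => (Finset.mem_filter.mp hs).1
  -- basic facts about the dyadic index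
  have hb1 : ∀ s ∈ S₂, (2:ℝ) ^ (j s) ≤ ε / r s := by
    intro s hs
    have hrs0 : 0 < r s := hr0 s (hS₂S s hs)
    have hratio : 1 ≤ ε / r s := by
      rw [le_div_iff₀ hrs0]; simpa using (hS₂mem s hs).2
    have hlb : (j s : ℝ) ≤ Real.logb 2 (ε / r s) :=
      Nat.floor_le (Real.logb_nonneg one_lt_two hratio)
    have h1 : (2:ℝ) ^ ((j s : ℕ) : ℝ) ≤ (2:ℝ) ^ Real.logb 2 (ε / r s) :=
      Real.rpow_le_rpow_of_exponent_le one_le_two hlb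
    rwa [Real.rpow_logb (by positivity) (by norm_num) (by positivity),
      Real.rpow_natCast] at h1
  have hb2 : ∀ s ∈ S₂, ε / 2 ^ (j s + 1) < r s := by
    intro s hs
    have hrs0 : 0 < r s := hr0 s (hS₂S s hs)
    have h2 : Real.logb 2 (ε / r s) < ((j s : ℕ) : ℝ) + 1 :=
      Nat.lt_floor_add_one _
    have h3 : ε / r s < (2:ℝ) ^ (((j s : ℕ) : ℝ) + 1) := by
      apply (Real.lt_rpow_iff_log_lt (div_pos hε0 hrs0) (by norm_num : (0:ℝ) < 2)).mpr
      rw [Real.logb] at h2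
      have hl2 : 0 < Real.log 2 := Real.log_pos one_lt_two
      calc Real.log (ε / r s) = Real.log (ε / r s) / Real.log 2 * Real.log 2 := by
            field_simp
        _ < (((j s : ℕ) : ℝ) + 1) * Real.log 2 := by
            exact mul_lt_mul_of_pos_right h2 hl2
    have h4 : ε / r s < (2:ℝ) ^ (j s + 1) := by
      rwa [show (((j s : ℕ) : ℝ) + 1) = ((j s + 1 : ℕ) : ℝ) by push_cast; ring,
        Real.rpow_natCast] at h3
    have h5 : (0:ℝ) < 2 ^ (j s + 1) := by positivity
    rw [div_lt_iff₀ h5]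
    rw [div_lt_iff₀ hrs0] at h4
    linarith [h4]
  have hjK : ∀ s ∈ S₂, j s ∈ Finset.range K := by
    intro s hs
    have hrs : δ ≤ r s := (hS₂mem s hs).1
    have h1 : ε / r s ≤ ε / δ := by
      apply div_le_div_of_nonneg_left hε0.le hδ0 hrs
    have h2 : (2:ℝ) ^ (j s) ≤ ε / δ := (hb1 s hs).trans h1
    have h3 : ((j s : ℕ) : ℝ) < (2:ℝ) ^ (j s) := by
      exact_mod_cast (Nat.lt_two_pow_self (n := j s))
    have h4 : ((j s : ℕ) : ℝ) < (⌈ε / δ⌉₊ : ℝ) + 1 := by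
      have := Nat.le_ceil (ε / δ)
      linarith
    rw [Finset.mem_range, hKdef]
    exact_mod_cast (by exact_mod_cast h4 : (j s : ℝ) < ((⌈ε / δ⌉₊ + 1 : ℕ) : ℝ))
  -- pointwise bound on each fiber
  set w : ℕ → ℝ := fun k => ((k : ℝ) + 1) * Real.log 2 + Real.log (1 / ε) with hwdef
  have hwnn : ∀ k, 0 ≤ w k := by
    intro k
    have : (0:ℝ) ≤ ((k : ℝ) + 1) * Real.log 2 := by positivity
    simp only [hwdef]; linarith
  have hfw : ∀ s ∈ S₂, f s ≤ w (j s) := by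
    intro s hs
    have hrs0 : 0 < r s := hr0 s (hS₂S s hs)
    have h2 : ε / 2 ^ (j s + 1) < r s := hb2 s hs
    have h5 : (0:ℝ) < 2 ^ (j s + 1) := by positivity
    have h6 : 1 / r s ≤ 2 ^ (j s + 1) / ε := by
      rw [div_le_div_iff₀ hrs0 hε0]
      rw [div_lt_iff₀ h5] at h2
      nlinarith
    have h7 : f s ≤ Real.log ((2:ℝ) ^ (j s + 1) / ε) :=
      Real.log_le_log (by positivity) h6
    calc f s ≤ Real.log ((2:ℝ) ^ (j s + 1) / ε) := h7
      _ = ((j s : ℝ) + 1) * Real.log 2 + Real.log (1 / ε) := by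
          rw [Real.log_div (by positivity) (by positivity), Real.log_pow,
            one_div, Real.log_inv]
          push_cast; ring
      _ = w (j s) := rfl
  -- counting in each fiber
  have hcount : ∀ k, ((S₂.filter (fun s => j s = k)).card : ℝ) ≤
      (2 * ε / δ) ^ 2 * (1 / 4 : ℝ) ^ k := by
    intro k
    set T := S₂.filter (fun s => j s = k) with hTdef
    have hTS : ∀ s ∈ T, s ∈ S := fun s hs =>
      hS₂S s (Finset.mem_filter.mp hs).1
    have hTrad : ∀ s ∈ T, ‖z₀ - s‖ ≤ ε / 2 ^ k := by
      intro s hs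
      have hs₂ : s ∈ S₂ := (Finset.mem_filter.mp hs).1
      have hjs : j s = k := (Finset.mem_filter.mp hs).2
      have := hb1 s hs₂
      rw [hjs] at this
      have hrs0 : 0 < r s := hr0 s (hS₂S s hs₂)
      have h2 : (0:ℝ) < 2 ^ k := by positivity
      rw [le_div_iff₀ hrs0] at this
      show r s ≤ ε / 2 ^ k
      rw [le_div_iff₀ h2]
      linarith
    rcases Finset.eq_empty_or_nonempty T with h | ⟨a, ha⟩
    · rw [h]; simp; positivity
    · have hδR : δ ≤ ε / 2 ^ k := le_trans (hS₂mem a (Finset.mem_filter.mp ha).1).1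
        (by simpa using hTrad a ha)
      have hcc := aux_count_le z₀ δ (ε / 2 ^ k) hδ0 hδR T hTrad
        (hdisj.subset (by intro x hx; exact Finset.mem_coe.mpr (hTS x (Finset.mem_coe.mp hx))))
      have heq : (2 * (ε / 2 ^ k) / δ) ^ 2 = (2 * ε / δ) ^ 2 * (1 / 4 : ℝ) ^ k := by
        have h4 : (4:ℝ) ^ k = (2 ^ k) ^ 2 := by
          rw [← pow_mul, show (4:ℝ) = 2 ^ 2 by norm_num, ← pow_mul]; ring_nf
        field_simp
        rw [← h4, ← mul_pow]; norm_num
      rw [heq] at hcc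
      exact hcc
  -- assemble the fiberwise sums
  have hfib : ∑ s ∈ S₂, f s =
      ∑ k ∈ Finset.range K, ∑ s ∈ S₂.filter (fun s => j s = k), f s :=
    (Finset.sum_fiberwise_of_maps_to hjK f).symm
  have hS₂sum : ∑ s ∈ S₂, f s ≤
      ∑ k ∈ Finset.range K, (2 * ε / δ) ^ 2 * (1 / 4 : ℝ) ^ k * w k := by
    rw [hfib]
    apply Finset.sum_le_sum
    intro k _
    calc ∑ s ∈ S₂.filter (fun s => j s = k), f s
        ≤ ∑ s ∈ S₂.filter (fun s => j s = k), w k := by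
          apply Finset.sum_le_sum
          intro s hs
          have hjs : j s = k := (Finset.mem_filter.mp hs).2
          have := hfw s (Finset.mem_filter.mp hs).1
          rwa [hjs] at this
      _ = ((S₂.filter (fun s => j s = k)).card : ℝ) * w k := by
          rw [Finset.sum_const, nsmul_eq_mul]
      _ ≤ (2 * ε / δ) ^ 2 * (1 / 4 : ℝ) ^ k * w k :=
          mul_le_mul_of_nonneg_right (hcount k) (hwnn k)
  -- bound the dyadic series
  have hgeom2 : ∑ k ∈ Finset.range K, ((1:ℝ) / 2) ^ k ≤ 2 := by
    have := aux_geom_le (1 / 2) (by norm_num) (by norm_num) K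
    norm_num at this ⊢; linarith
  have hgeom4 : ∑ k ∈ Finset.range K, ((1:ℝ) / 4) ^ k ≤ 4 / 3 := by
    have := aux_geom_le (1 / 4) (by norm_num) (by norm_num) K
    norm_num at this ⊢; linarith
  have hgeomlin : ∑ k ∈ Finset.range K, ((k : ℝ) + 1) * ((1:ℝ) / 4) ^ k ≤ 4 := by
    calc ∑ k ∈ Finset.range K, ((k : ℝ) + 1) * ((1:ℝ) / 4) ^ k
        ≤ ∑ k ∈ Finset.range K, 2 * ((1:ℝ) / 2) ^ k := by
          apply Finset.sum_le_sum
          intro k _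
          have h1 : ((k : ℝ) + 1) ≤ 2 * 2 ^ k := by
            have hk : ((k : ℕ) : ℝ) < (2:ℝ) ^ k := by
              exact_mod_cast (Nat.lt_two_pow_self (n := k))
            have h1k : (1:ℝ) ≤ 2 ^ k := by
              exact_mod_cast Nat.one_le_two_pow (n := k)
            linarith
          have h2 : ((1:ℝ) / 4) ^ k = ((1:ℝ) / 2) ^ k * ((1:ℝ) / 2) ^ k := by
            rw [← mul_pow]; norm_num
          have h3 : (0:ℝ) < ((1:ℝ) / 2) ^ k := by positivity
          have h4 : (2:ℝ) ^ k * ((1:ℝ) / 2) ^ k = 1 := by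
            rw [← mul_pow]; norm_num
          calc ((k : ℝ) + 1) * ((1:ℝ) / 4) ^ k
              = ((k : ℝ) + 1) * ((1:ℝ) / 2) ^ k * ((1:ℝ) / 2) ^ k := by
                rw [h2]; ring
            _ ≤ 2 * 2 ^ k * ((1:ℝ) / 2) ^ k * ((1:ℝ) / 2) ^ k := by
                have := mul_le_mul_of_nonneg_right
                  (mul_le_mul_of_nonneg_right h1 h3.le) h3.le
                linarith [this]
            _ = 2 * ((1:ℝ) / 2) ^ k := by
                rw [mul_assoc 2, h4]; ring
      _ = 2 * ∑ k ∈ Finset.range K, ((1:ℝ) / 2) ^ k := by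
          rw [Finset.mul_sum]
      _ ≤ 4 := by linarith
  have hseries : ∑ k ∈ Finset.range K, (2 * ε / δ) ^ 2 * (1 / 4 : ℝ) ^ k * w k ≤
      (2 * ε / δ) ^ 2 * (4 * Real.log 2 + (4 / 3) * Real.log (1 / ε)) := by
    have hA : (0:ℝ) ≤ (2 * ε / δ) ^ 2 := by positivity
    calc ∑ k ∈ Finset.range K, (2 * ε / δ) ^ 2 * (1 / 4 : ℝ) ^ k * w k
        = (2 * ε / δ) ^ 2 * ∑ k ∈ Finset.range K,
            (((k : ℝ) + 1) * ((1:ℝ) / 4) ^ k * Real.log 2 +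
              ((1:ℝ) / 4) ^ k * Real.log (1 / ε)) := by
          rw [Finset.mul_sum]
          apply Finset.sum_congr rfl
          intro k _
          simp only [hwdef]; ring
      _ = (2 * ε / δ) ^ 2 *
            ((∑ k ∈ Finset.range K, ((k : ℝ) + 1) * ((1:ℝ) / 4) ^ k) * Real.log 2 +
              (∑ k ∈ Finset.range K, ((1:ℝ) / 4) ^ k) * Real.log (1 / ε)) := by
          rw [Finset.sum_add_distrib, ← Finset.sum_mul, ← Finset.sum_mul]
      _ ≤ (2 * ε / δ) ^ 2 * (4 * Real.log 2 + (4 / 3) * Real.log (1 / ε)) := by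
          apply mul_le_mul_of_nonneg_left _ hA
          have h1 := mul_le_mul_of_nonneg_right hgeomlin hlog2
          have h2 := mul_le_mul_of_nonneg_right hgeom4 hlogε
          linarith
  -- final combination
  have hfinal : (2 * ε / δ) ^ 2 * (4 * Real.log 2 + (4 / 3) * Real.log (1 / ε)) ≤
      9 * Real.pi * (2 * ε / δ) ^ 2 *
        ((4 / 9) * Real.log 2 + (1 / 3) * Real.log (1 / ε)) := by
    have hA : (0:ℝ) ≤ (2 * ε / δ) ^ 2 := by positivity
    have key : 4 * Real.log 2 + (4 / 3) * Real.log (1 / ε) ≤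
        9 * Real.pi * ((4 / 9) * Real.log 2 + (1 / 3) * Real.log (1 / ε)) := by
      nlinarith [mul_le_mul_of_nonneg_left hπ hlog2,
        mul_le_mul_of_nonneg_left hπ hlogε]
    calc (2 * ε / δ) ^ 2 * (4 * Real.log 2 + (4 / 3) * Real.log (1 / ε))
        ≤ (2 * ε / δ) ^ 2 *
            (9 * Real.pi * ((4 / 9) * Real.log 2 + (1 / 3) * Real.log (1 / ε))) :=
          mul_le_mul_of_nonneg_left key hA
      _ = 9 * Real.pi * (2 * ε / δ) ^ 2 *
            ((4 / 9) * Real.log 2 + (1 / 3) * Real.log (1 / ε)) := by ring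
  calc ∑ s ∈ S, f s = ∑ s ∈ S₁, f s + ∑ s ∈ S₂, f s := hsplit
    _ ≤ Real.log (1 / ρ) + 9 * Real.pi * (2 * ε / δ) ^ 2 *
          ((4 / 9) * Real.log 2 + (1 / 3) * Real.log (1 / ε)) := by
        have := hS₂sum.trans (hseries.trans hfinal)
        linarith [hS₁sum]
end
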